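/- arXiv:1101.0565 — 4 statements merged into one kernel-verified Lean document; each statement's English description precedes it below -/
import Mathlib

section
/- Let Q ⊆ ℝ² be a range and let S ⊂ ℝ² be a finite set of points. For every homothet Q' of Q that contains at least two points of S, there exists a homothet Q'' of Q with Q'' ⊆ Q' such that Q'' contains at least two points of S on its topological boundary and contains no point of S in its topological interior. -/
/-- A range: a compact convex subset of the plane with nonempty interior
containing the origin. -/
def IsRange (Q : Set (ℝ × ℝ)) : Prop :=
  IsCompact Q ∧ Convex ℝ Q ∧ (interior Q).Nonempty ∧ (0 : ℝ × ℝ) ∈ Q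

/-- The homothet `Q(t, l) = {l • x + t : x ∈ Q}`. -/
def homothet (Q : Set (ℝ × ℝ)) (t : ℝ × ℝ) (l : ℝ) : Set (ℝ × ℝ) :=
  (fun x => l • x + t) '' Q

/-- Every homothet of `Q` containing at least two points of `S` can be shrunk to a
homothet `Q''` contained in it, having at least two points of `S` on its boundary
and no point of `S` in its interior. -/
theorem shrink_to_boundary (Q : Set (ℝ × ℝ)) (hQ : IsRange Q)
    (S : Finset (ℝ × ℝ)) (t : ℝ × ℝ) (l : ℝ) (hl : 0 < l)
    (h2 : ∃ p ∈ S, ∃ q ∈ S, p ≠ q ∧ p ∈ homothet Q t l ∧ q ∈ homothet Q t l) :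
    ∃ t' : ℝ × ℝ, ∃ l' : ℝ, 0 < l' ∧
      homothet Q t' l' ⊆ homothet Q t l ∧
      (∃ p ∈ S, ∃ q ∈ S, p ≠ q ∧
        p ∈ frontier (homothet Q t' l') ∧ q ∈ frontier (homothet Q t' l')) ∧
      ∀ p ∈ S, p ∉ interior (homothet Q t' l') := by
  obtain ⟨hQc, hQconv, -, -⟩ := hQ
  -- basic facts about homothets
  have hcomp : ∀ (t' : ℝ × ℝ) (l' : ℝ), IsCompact (homothet Q t' l') := by
    intro t' l'
    exact hQc.image (by fun_prop)
  have hconv : ∀ (t' : ℝ × ℝ) (l' : ℝ), Convex ℝ (homothet Q t' l') := by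
    intro t' l' x hx y hy a b ha hb hab
    obtain ⟨u, hu, rfl⟩ := hx
    obtain ⟨v, hv, rfl⟩ := hy
    refine ⟨a • u + b • v, hQconv hu hv ha hb hab, ?_⟩
    show l' • (a • u + b • v) + t' = a • (l' • u + t') + b • (l' • v + t')
    have hb' : b = 1 - a := by linarith
    subst hb'
    module
  -- the compact pieces: points (t', l') with l' ∈ [0, l] and p ∈ homothet Q t' l'
  set C : ℝ × ℝ → Set ((ℝ × ℝ) × ℝ) :=
    fun p => (fun z : (ℝ × ℝ) × ℝ => (p - z.2 • z.1, z.2)) '' (Q ×ˢ Set.Icc 0 l) with hC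
  have hC_mem : ∀ (p : ℝ × ℝ) (y : (ℝ × ℝ) × ℝ),
      y ∈ C p ↔ y.2 ∈ Set.Icc (0 : ℝ) l ∧ p ∈ homothet Q y.1 y.2 := by
    intro p y
    constructor
    · rintro ⟨⟨x, lam⟩, ⟨hxQ, hlam⟩, h⟩
      rw [Prod.ext_iff] at h
      simp only at h hxQ hlam
      obtain ⟨h1, h2'⟩ := h
      refine ⟨h2' ▸ hlam, ⟨x, hxQ, ?_⟩⟩
      show y.2 • x + y.1 = p
      rw [← h2', ← h1]
      abel
    · rintro ⟨hlam, ⟨x, hxQ, hx⟩⟩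
      refine ⟨⟨x, y.2⟩, ⟨hxQ, hlam⟩, ?_⟩
      show (p - y.2 • x, y.2) = y
      rw [Prod.ext_iff]
      refine ⟨?_, rfl⟩
      show p - y.2 • x = y.1
      have hx' : y.2 • x + y.1 = p := hx
      rw [← hx']
      abel
  have hC_comp : ∀ p : ℝ × ℝ, IsCompact (C p) := by
    intro p
    exact (hQc.prod isCompact_Icc).image (by fun_prop)
  -- the closed subset condition
  set Sub : Set ((ℝ × ℝ) × ℝ) :=
    {y | homothet Q y.1 y.2 ⊆ homothet Q t l} with hSubdef
  have hSub_mem : ∀ y : (ℝ × ℝ) × ℝ,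
      y ∈ Sub ↔ ∀ x ∈ Q, y.2 • x + y.1 ∈ homothet Q t l := by
    intro y
    constructor
    · intro h x hx
      exact h ⟨x, hx, rfl⟩
    · rintro h z ⟨x, hx, rfl⟩
      exact h x hx
  have hSub_closed : IsClosed Sub := by
    have : Sub = ⋂ x ∈ Q, {y : (ℝ × ℝ) × ℝ | y.2 • x + y.1 ∈ homothet Q t l} := by
      ext y
      simp only [Set.mem_iInter, Set.mem_setOf_eq]
      exact hSub_mem y
    rw [this]
    refine isClosed_biInter fun x hx => ?_
    exact IsClosed.preimage (by fun_prop) (hcomp t l).isClosed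
  -- the set over which we minimize
  set K : Set ((ℝ × ℝ) × ℝ) :=
    {y | y ∈ Sub ∧ ∃ p ∈ S, ∃ q ∈ S, p ≠ q ∧ y ∈ C p ∧ y ∈ C q} with hKdef
  have hK_comp : IsCompact K := by
    have hKeq : K = ⋃ p ∈ (S : Set (ℝ × ℝ)), ⋃ q ∈ (S : Set (ℝ × ℝ)) \ {p},
        (C p ∩ (C q ∩ Sub)) := by
      ext y
      simp only [hKdef, Set.mem_setOf_eq, Set.mem_iUnion, Set.mem_inter_iff,
        Set.mem_diff, Set.mem_singleton_iff, Finset.mem_coe]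
      constructor
      · rintro ⟨hsub, p, hp, q, hq, hne, hyp, hyq⟩
        exact ⟨p, hp, q, ⟨hq, hne.symm⟩, hyp, hyq, hsub⟩
      · rintro ⟨p, hp, q, ⟨hq, hne⟩, hyp, hyq, hsub⟩
        exact ⟨hsub, p, hp, q, hq, fun h => hne h.symm, hyp, hyq⟩
    rw [hKeq]
    refine S.finite_toSet.isCompact_biUnion fun p _ => ?_
    refine (S.finite_toSet.sdiff (t := {p})).isCompact_biUnion fun q _ => ?_
    exact (hC_comp p).inter_right ((hC_comp q).isClosed.inter hSub_closed)
  have hK_ne : K.Nonempty := by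
    obtain ⟨p, hp, q, hq, hne, hpQ, hqQ⟩ := h2
    refine ⟨(t, l), ?_, p, hp, q, hq, hne, ?_, ?_⟩
    · exact fun z hz => hz
    · exact (hC_mem p (t, l)).2 ⟨⟨le_of_lt hl, le_refl l⟩, hpQ⟩
    · exact (hC_mem q (t, l)).2 ⟨⟨le_of_lt hl, le_refl l⟩, hqQ⟩
  obtain ⟨y₀, hy₀K, hy₀min⟩ :=
    hK_comp.exists_isMinOn hK_ne (continuous_snd.continuousOn)
  obtain ⟨hy₀Sub, p, hpS, q, hqS, hpq, hy₀p, hy₀q⟩ := hy₀K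
  set t₀ := y₀.1 with ht₀
  set l₀ := y₀.2 with hl₀
  obtain ⟨hl₀Icc, hpA⟩ := (hC_mem p y₀).1 hy₀p
  obtain ⟨-, hqA⟩ := (hC_mem q y₀).1 hy₀q
  -- l₀ > 0
  have hl₀pos : 0 < l₀ := by
    rcases lt_or_eq_of_le hl₀Icc.1 with h | h
    · exact h
    · exfalso
      obtain ⟨u, -, hu⟩ := hpA
      obtain ⟨v, -, hv⟩ := hqA
      apply hpq
      rw [← hu, ← hv, ← h]
      simp
  -- the key claim: no point of S lies in the interior
  have key : ∀ r ∈ S, r ∉ interior (homothet Q t₀ l₀) := by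
    intro r hrS hrint
    -- pick s ∈ {p, q}, s ≠ r, s ∈ homothet Q t₀ l₀
    obtain ⟨s, hsS, hsne, hsA⟩ :
        ∃ s ∈ S, s ≠ r ∧ s ∈ homothet Q t₀ l₀ := by
      by_cases h : p = r
      · exact ⟨q, hqS, fun hh => hpq (h ▸ hh ▸ rfl), hqA⟩
      · exact ⟨p, hpS, h, hpA⟩
    set g : ℝ → ℝ × ℝ := fun μ => s + μ⁻¹ • (r - s) with hg
    have hg1 : g 1 = r := by simp [hg]
    have hgc : ContinuousAt g 1 := by
      apply ContinuousAt.add continuousAt_const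
      exact ContinuousAt.smul (continuousAt_id.inv₀ one_ne_zero) continuousAt_const
    have hev : ∀ᶠ μ in nhds (1 : ℝ), g μ ∈ interior (homothet Q t₀ l₀) :=
      hgc.eventually_mem (isOpen_interior.mem_nhds (hg1 ▸ hrint))
    have hev2 : ∀ᶠ μ in nhds (1 : ℝ), (0 : ℝ) < μ := eventually_gt_nhds one_pos
    obtain ⟨μ, hgμ, hμpos, hμlt⟩ :
        ∃ μ : ℝ, g μ ∈ interior (homothet Q t₀ l₀) ∧ 0 < μ ∧ μ < 1 := by
      have h3 : ∀ᶠ μ in nhdsWithin (1 : ℝ) (Set.Iio 1),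
          g μ ∈ interior (homothet Q t₀ l₀) ∧ 0 < μ ∧ μ < 1 := by
        filter_upwards [eventually_nhdsWithin_of_eventually_nhds (hev.and hev2),
          self_mem_nhdsWithin] with μ hμ hμ'
        exact ⟨hμ.1, hμ.2, hμ'⟩
      obtain ⟨μ, hμ⟩ := h3.exists
      exact ⟨μ, hμ⟩
    obtain ⟨x, hxQ, hx⟩ := interior_subset hgμ
    obtain ⟨v, hvQ, hv⟩ := hsA
    -- the shrunken homothet
    set t₁ : ℝ × ℝ := μ • t₀ + (1 - μ) • s with ht₁
    set l₁ : ℝ := μ * l₀ with hl₁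
    have hμμ : μ * μ⁻¹ = 1 := mul_inv_cancel₀ (ne_of_gt hμpos)
    have hsub₁ : homothet Q t₁ l₁ ⊆ homothet Q t₀ l₀ := by
      rintro z ⟨w, hwQ, rfl⟩
      show l₁ • w + t₁ ∈ homothet Q t₀ l₀
      have heq : l₁ • w + t₁ = μ • (l₀ • w + t₀) + (1 - μ) • s := by
        rw [hl₁, ht₁]; module
      rw [heq]
      exact hconv t₀ l₀ ⟨w, hwQ, rfl⟩ ⟨v, hvQ, hv⟩ (le_of_lt hμpos) (by linarith) (by ring)
    have hrmem : r ∈ homothet Q t₁ l₁ := by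
      refine ⟨x, hxQ, ?_⟩
      show l₁ • x + t₁ = r
      have hx' : l₀ • x + t₀ = g μ := hx
      have heq : l₁ • x + t₁ = μ • (l₀ • x + t₀) + (1 - μ) • s := by
        rw [hl₁, ht₁]; module
      rw [heq, hx', hg]
      have : μ • (s + μ⁻¹ • (r - s)) + (1 - μ) • s = (μ * μ⁻¹) • (r - s) + s := by
        module
      rw [this, hμμ, one_smul]
      abel
    have hsmem : s ∈ homothet Q t₁ l₁ := by
      refine ⟨v, hvQ, ?_⟩
      show l₁ • v + t₁ = s
      have hv' : l₀ • v + t₀ = s := hv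
      have heq : l₁ • v + t₁ = μ • (l₀ • v + t₀) + (1 - μ) • s := by
        rw [hl₁, ht₁]; module
      rw [heq, hv']
      module
    have hl₁Icc : l₁ ∈ Set.Icc (0 : ℝ) l := by
      constructor
      · positivity
      · nlinarith [hl₀Icc.2]
    have hmemK : ((t₁, l₁) : (ℝ × ℝ) × ℝ) ∈ K := by
      refine ⟨fun z hz => hy₀Sub (hsub₁ hz), r, hrS, s, hsS, fun h => hsne h.symm, ?_, ?_⟩
      · exact (hC_mem r (t₁, l₁)).2 ⟨hl₁Icc, hrmem⟩
      · exact (hC_mem s (t₁, l₁)).2 ⟨hl₁Icc, hsmem⟩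
    have hle : l₀ ≤ μ * l₀ := hy₀min hmemK
    nlinarith
  refine ⟨t₀, l₀, hl₀pos, hy₀Sub, ⟨p, hpS, q, hqS, hpq, ?_, ?_⟩, key⟩
  · rw [(hcomp t₀ l₀).isClosed.frontier_eq]
    exact ⟨hpA, key p hpS⟩
  · rw [(hcomp t₀ l₀).isClosed.frontier_eq]
    exact ⟨hqA, key q hqS⟩
end

section
/- Let S ⊂ ℝ³ be a finite set of n ≥ 3 points such that no two points of S share an x-, y-, or z-coordinate, and let 2 ≤ k ≤ n. Define the graph G_k(S) on vertex set S whose edges are the pairs {u,v} of distinct points of S for which there exists q ∈ ℝ³ with u ∈ e(q), v ∈ e(q), and |e(q)| ≤ k. Then G_k(S) has at most 3(k−1)n − 6 edges. -/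
open scoped Classical

/-- `q` dominates `u`: every coordinate of `u` is at most the corresponding
coordinate of `q`. -/
def Dominates (q u : ℝ × ℝ × ℝ) : Prop :=
  u.1 ≤ q.1 ∧ u.2.1 ≤ q.2.1 ∧ u.2.2 ≤ q.2.2

namespace GkAux

abbrev Pt : Type := ℝ × ℝ × ℝ

abbrev px : Pt → ℝ := fun p => p.1
abbrev py : Pt → ℝ := fun p => p.2.1
abbrev pz : Pt → ℝ := fun p => p.2.2

noncomputable def domBy (S : Finset Pt) (u : Pt) : Finset Pt :=
  S.filter (fun w => Dominates u w)

noncomputable def Phi (S : Finset Pt) (k : ℕ) (f g h : Pt → ℝ) (u : Pt) : Finset Pt :=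
  S.filter (fun v => f v < f u ∧ g v < g u ∧ h u < h v ∧
    (S.filter (fun w => f w ≤ f u ∧ g w ≤ g u ∧ h w ≤ h v)).card ≤ k)

noncomputable def PhiD (S : Finset Pt) (k : ℕ) (u : Pt) : Finset Pt :=
  S.filter (fun v => px v < px u ∧ py v < py u ∧ pz v < pz u ∧ (domBy S u).card ≤ k)

noncomputable def Un (S : Finset Pt) (k : ℕ) (u : Pt) : Finset Pt :=
  PhiD S k u ∪ Phi S k px py pz u ∪ Phi S k py pz px u ∪ Phi S k px pz py u

noncomputable def phi (S : Finset Pt) (k : ℕ) (u : Pt) : ℕ :=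
  (PhiD S k u).card + (Phi S k px py pz u).card + (Phi S k py pz px u).card +
    (Phi S k px pz py u).card

lemma mem_Phi {S : Finset Pt} {k : ℕ} {f g h : Pt → ℝ} {u v : Pt} :
    v ∈ Phi S k f g h u ↔ v ∈ S ∧ f v < f u ∧ g v < g u ∧ h u < h v ∧
      (S.filter (fun w => f w ≤ f u ∧ g w ≤ g u ∧ h w ≤ h v)).card ≤ k :=
  Finset.mem_filter

lemma mem_PhiD {S : Finset Pt} {k : ℕ} {u v : Pt} :
    v ∈ PhiD S k u ↔ v ∈ S ∧ px v < px u ∧ py v < py u ∧ pz v < pz u ∧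
      (domBy S u).card ≤ k :=
  Finset.mem_filter

lemma dom_xyz : ∀ a b : Pt, (px b ≤ px a ∧ py b ≤ py a ∧ pz b ≤ pz a) ↔ Dominates a b :=
  fun _ _ => Iff.rfl

lemma dom_yzx : ∀ a b : Pt, (py b ≤ py a ∧ pz b ≤ pz a ∧ px b ≤ px a) ↔ Dominates a b :=
  fun _ _ => ⟨fun ⟨h1, h2, h3⟩ => ⟨h3, h1, h2⟩, fun ⟨h1, h2, h3⟩ => ⟨h2, h3, h1⟩⟩

lemma dom_xzy : ∀ a b : Pt, (px b ≤ px a ∧ pz b ≤ pz a ∧ py b ≤ py a) ↔ Dominates a b :=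
  fun _ _ => ⟨fun ⟨h1, h2, h3⟩ => ⟨h1, h3, h2⟩, fun ⟨h1, h2, h3⟩ => ⟨h1, h3, h2⟩⟩

lemma Phi_comm {S : Finset Pt} {k : ℕ} {f g h : Pt → ℝ} {u : Pt} :
    Phi S k f g h u = Phi S k g f h u := by
  unfold Phi
  apply Finset.filter_congr
  intro v hv
  have hfilt : ∀ z : ℝ, S.filter (fun w => g w ≤ g u ∧ f w ≤ f u ∧ h w ≤ z)
      = S.filter (fun w => f w ≤ f u ∧ g w ≤ g u ∧ h w ≤ z) := by
    intro z
    apply Finset.filter_congr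
    intro w hw
    tauto
  constructor
  · rintro ⟨h1, h2, h3, h4⟩
    refine ⟨h2, h1, h3, ?_⟩
    rw [hfilt]
    exact h4
  · rintro ⟨h1, h2, h3, h4⟩
    refine ⟨h2, h1, h3, ?_⟩
    rw [hfilt] at h4
    exact h4

lemma Phi_empty_f {S : Finset Pt} {k : ℕ} {f g h : Pt → ℝ} {u : Pt}
    (hmin : ∀ b ∈ S, b ≠ u → f u < f b) : Phi S k f g h u = ∅ := by
  rw [Finset.eq_empty_iff_forall_notMem]
  intro v hv
  rw [mem_Phi] at hv
  obtain ⟨hvS, h1, -, -, -⟩ := hv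
  have hne : v ≠ u := fun he => absurd h1 (he ▸ lt_irrefl _)
  exact absurd h1 (not_lt.mpr (le_of_lt (hmin v hvS hne)))

lemma Phi_empty_g {S : Finset Pt} {k : ℕ} {f g h : Pt → ℝ} {u : Pt}
    (hmin : ∀ b ∈ S, b ≠ u → g u < g b) : Phi S k f g h u = ∅ := by
  rw [Finset.eq_empty_iff_forall_notMem]
  intro v hv
  rw [mem_Phi] at hv
  obtain ⟨hvS, -, h2, -, -⟩ := hv
  have hne : v ≠ u := fun he => absurd h2 (he ▸ lt_irrefl _)
  exact absurd h2 (not_lt.mpr (le_of_lt (hmin v hvS hne)))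

lemma PhiD_empty_x {S : Finset Pt} {k : ℕ} {u : Pt}
    (hmin : ∀ b ∈ S, b ≠ u → px u < px b) : PhiD S k u = ∅ := by
  rw [Finset.eq_empty_iff_forall_notMem]
  intro v hv
  rw [mem_PhiD] at hv
  obtain ⟨hvS, h1, -, -, -⟩ := hv
  have hne : v ≠ u := fun he => absurd h1 (he ▸ lt_irrefl _)
  exact absurd h1 (not_lt.mpr (le_of_lt (hmin v hvS hne)))

lemma PhiD_empty_y {S : Finset Pt} {k : ℕ} {u : Pt}
    (hmin : ∀ b ∈ S, b ≠ u → py u < py b) : PhiD S k u = ∅ := by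
  rw [Finset.eq_empty_iff_forall_notMem]
  intro v hv
  rw [mem_PhiD] at hv
  obtain ⟨hvS, -, h2, -, -⟩ := hv
  have hne : v ≠ u := fun he => absurd h2 (he ▸ lt_irrefl _)
  exact absurd h2 (not_lt.mpr (le_of_lt (hmin v hvS hne)))

lemma PhiD_empty_z {S : Finset Pt} {k : ℕ} {u : Pt}
    (hmin : ∀ b ∈ S, b ≠ u → pz u < pz b) : PhiD S k u = ∅ := by
  rw [Finset.eq_empty_iff_forall_notMem]
  intro v hv
  rw [mem_PhiD] at hv
  obtain ⟨hvS, -, -, h3, -⟩ := hv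
  have hne : v ≠ u := fun he => absurd h3 (he ▸ lt_irrefl _)
  exact absurd h3 (not_lt.mpr (le_of_lt (hmin v hvS hne)))

lemma domBy_card_pos {S : Finset Pt} {u : Pt} (hu : u ∈ S) : 1 ≤ (domBy S u).card := by
  have : u ∈ domBy S u := Finset.mem_filter.mpr ⟨hu, le_refl _, le_refl _, le_refl _⟩
  exact Finset.card_pos.mpr ⟨u, this⟩

lemma PhiD_card_lt {S : Finset Pt} {k : ℕ} {u : Pt} (hu : u ∈ S) :
    (PhiD S k u).card + 1 ≤ (domBy S u).card := by
  have humem : u ∈ domBy S u := Finset.mem_filter.mpr ⟨hu, le_refl _, le_refl _, le_refl _⟩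
  have hsub : PhiD S k u ⊆ (domBy S u).erase u := by
    intro v hv
    rw [mem_PhiD] at hv
    obtain ⟨hvS, h1, h2, h3, -⟩ := hv
    refine Finset.mem_erase.mpr ⟨fun he => absurd h1 (he ▸ lt_irrefl _), ?_⟩
    exact Finset.mem_filter.mpr ⟨hvS, le_of_lt h1, le_of_lt h2, le_of_lt h3⟩
  have h1 := Finset.card_le_card hsub
  rw [Finset.card_erase_of_mem humem] at h1
  have h2 := domBy_card_pos hu
  omega

lemma PhiD_le_k {S : Finset Pt} {k : ℕ} {u : Pt} (hne : (PhiD S k u).Nonempty) :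
    (domBy S u).card ≤ k := by
  obtain ⟨v, hv⟩ := hne
  exact (mem_PhiD.mp hv).2.2.2.2

lemma Phi_plus {S : Finset Pt} {k : ℕ} {f g h : Pt → ℝ} {u : Pt} (hu : u ∈ S)
    (hdom : ∀ a b : Pt, (f b ≤ f a ∧ g b ≤ g a ∧ h b ≤ h a) ↔ Dominates a b)
    (hne : (Phi S k f g h u).Nonempty) :
    (domBy S u).card + (Phi S k f g h u).card ≤ k := by
  obtain ⟨v0, hv0, hmax⟩ := Finset.exists_max_image (Phi S k f g h u) h hne
  have hv0' := mem_Phi.mp hv0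
  obtain ⟨hv0S, hb1, hb2, hb3, hcard⟩ := hv0'
  have hdisj : Disjoint (domBy S u) (Phi S k f g h u) := by
    rw [Finset.disjoint_left]
    intro w hwD hwP
    have h1 := ((hdom u w).mpr (Finset.mem_filter.mp hwD).2).2.2
    have h2 := (mem_Phi.mp hwP).2.2.2.1
    exact absurd h1 (not_le.mpr h2)
  have hsub : domBy S u ∪ Phi S k f g h u ⊆
      S.filter (fun w => f w ≤ f u ∧ g w ≤ g u ∧ h w ≤ h v0) := by
    intro w hw
    rcases Finset.mem_union.mp hw with hw | hw
    · have hwS := (Finset.mem_filter.mp hw).1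
      have hd := (hdom u w).mpr (Finset.mem_filter.mp hw).2
      exact Finset.mem_filter.mpr ⟨hwS, hd.1, hd.2.1, le_trans hd.2.2 (le_of_lt hb3)⟩
    · have hmw := hmax w hw
      have hw' := mem_Phi.mp hw
      exact Finset.mem_filter.mpr ⟨hw'.1, le_of_lt hw'.2.1, le_of_lt hw'.2.2.1, hmw⟩
  calc (domBy S u).card + (Phi S k f g h u).card
      = (domBy S u ∪ Phi S k f g h u).card := (Finset.card_union_of_disjoint hdisj).symm
    _ ≤ (S.filter (fun w => f w ≤ f u ∧ g w ≤ g u ∧ h w ≤ h v0)).card :=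
        Finset.card_le_card hsub
    _ ≤ k := hcard

lemma Phi_card_le {S : Finset Pt} {k : ℕ} {f g h : Pt → ℝ} {u : Pt} (hu : u ∈ S)
    (hdom : ∀ a b : Pt, (f b ≤ f a ∧ g b ≤ g a ∧ h b ≤ h a) ↔ Dominates a b)
    (hk : 1 ≤ k) : (Phi S k f g h u).card + 1 ≤ k := by
  by_cases hne : (Phi S k f g h u).Nonempty
  · have h1 := Phi_plus hu hdom hne
    have h2 := domBy_card_pos hu
    omega
  · rw [Finset.not_nonempty_iff_eq_empty] at hne
    rw [hne]
    simpa using hk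

lemma Phi_card_le2 {S : Finset Pt} {k : ℕ} {f g h : Pt → ℝ} {u : Pt} (hu : u ∈ S)
    (hdom : ∀ a b : Pt, (f b ≤ f a ∧ g b ≤ g a ∧ h b ≤ h a) ↔ Dominates a b)
    (hr : 2 ≤ (domBy S u).card) (hk : 2 ≤ k) : (Phi S k f g h u).card + 2 ≤ k := by
  by_cases hne : (Phi S k f g h u).Nonempty
  · have h1 := Phi_plus hu hdom hne
    omega
  · rw [Finset.not_nonempty_iff_eq_empty] at hne
    rw [hne]
    simpa using hk

lemma L1 {S : Finset Pt} {k : ℕ} {f g h : Pt → ℝ} {u : Pt} (hu : u ∈ S)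
    (hdom : ∀ a b : Pt, (f b ≤ f a ∧ g b ≤ g a ∧ h b ≤ h a) ↔ Dominates a b)
    (hk : 1 ≤ k) : (PhiD S k u).card + (Phi S k f g h u).card + 1 ≤ k := by
  have hD := PhiD_card_lt (S := S) (k := k) hu
  by_cases hne : (Phi S k f g h u).Nonempty
  · have h1 := Phi_plus hu hdom hne
    omega
  · rw [Finset.not_nonempty_iff_eq_empty] at hne
    rw [hne]
    by_cases hne2 : (PhiD S k u).Nonempty
    · have h2 := PhiD_le_k hne2
      simp only [Finset.card_empty]
      omega
    · rw [Finset.not_nonempty_iff_eq_empty] at hne2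
      rw [hne2]
      simpa using hk

lemma mem_Phi_of {S : Finset Pt} {k : ℕ} {f g h : Pt → ℝ} {u v q : Pt}
    (hv : v ∈ S)
    (hdom : ∀ a b : Pt, (f b ≤ f a ∧ g b ≤ g a ∧ h b ≤ h a) ↔ Dominates a b)
    (h1 : f v < f u) (h2 : g v < g u) (h3 : h u < h v)
    (hqu : Dominates q u) (hqv : Dominates q v)
    (hqk : (S.filter (fun w => Dominates q w)).card ≤ k) :
    v ∈ Phi S k f g h u := by
  refine mem_Phi.mpr ⟨hv, h1, h2, h3, ?_⟩
  refine le_trans (Finset.card_le_card ?_) hqk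
  intro w hw
  rw [Finset.mem_filter] at hw ⊢
  obtain ⟨hwS, hw1, hw2, hw3⟩ := hw
  have hu' := (hdom q u).mpr hqu
  have hv' := (hdom q v).mpr hqv
  exact ⟨hwS, (hdom q w).mp ⟨le_trans hw1 hu'.1, le_trans hw2 hu'.2.1,
    le_trans hw3 hv'.2.2⟩⟩

lemma mem_PhiD_of {S : Finset Pt} {k : ℕ} {u v q : Pt}
    (hv : v ∈ S)
    (h1 : px v < px u) (h2 : py v < py u) (h3 : pz v < pz u)
    (hqu : Dominates q u)
    (hqk : (S.filter (fun w => Dominates q w)).card ≤ k) :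
    v ∈ PhiD S k u := by
  refine mem_PhiD.mpr ⟨hv, h1, h2, h3, ?_⟩
  refine le_trans (Finset.card_le_card ?_) hqk
  intro w hw
  rw [domBy, Finset.mem_filter] at hw
  rw [Finset.mem_filter]
  obtain ⟨hwS, hwD⟩ := hw
  exact ⟨hwS, le_trans hwD.1 hqu.1, le_trans hwD.2.1 hqu.2.1, le_trans hwD.2.2 hqu.2.2⟩

lemma mem_Un_D {S : Finset Pt} {k : ℕ} {u v : Pt} (h : v ∈ PhiD S k u) :
    v ∈ Un S k u := by
  unfold Un; simp [Finset.mem_union, h]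

lemma mem_Un_xy {S : Finset Pt} {k : ℕ} {u v : Pt} (h : v ∈ Phi S k px py pz u) :
    v ∈ Un S k u := by
  unfold Un; simp [Finset.mem_union, h]

lemma mem_Un_yz {S : Finset Pt} {k : ℕ} {u v : Pt} (h : v ∈ Phi S k py pz px u) :
    v ∈ Un S k u := by
  unfold Un; simp [Finset.mem_union, h]

lemma mem_Un_xz {S : Finset Pt} {k : ℕ} {u v : Pt} (h : v ∈ Phi S k px pz py u) :
    v ∈ Un S k u := by
  unfold Un; simp [Finset.mem_union, h]

lemma card_Un_le {S : Finset Pt} {k : ℕ} {u : Pt} : (Un S k u).card ≤ phi S k u := by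
  unfold Un phi
  exact le_trans (Finset.card_union_le _ _)
    (Nat.add_le_add_right (le_trans (Finset.card_union_le _ _)
      (Nat.add_le_add_right (Finset.card_union_le _ _) _)) _)

lemma winner {S : Finset Pt} {k : ℕ} {u v q : Pt} (hu : u ∈ S) (hv : v ∈ S)
    (hx : px u ≠ px v) (hy : py u ≠ py v) (hz : pz u ≠ pz v)
    (hqu : Dominates q u) (hqv : Dominates q v)
    (hqk : (S.filter (fun w => Dominates q w)).card ≤ k) :
    v ∈ Un S k u ∨ u ∈ Un S k v := by
  rcases hx.lt_or_gt with hx | hx <;> rcases hy.lt_or_gt with hy | hy <;>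
    rcases hz.lt_or_gt with hz | hz
  · exact Or.inr (mem_Un_D (mem_PhiD_of hu hx hy hz hqv hqk))
  · exact Or.inr (mem_Un_xy (mem_Phi_of hu dom_xyz hx hy hz hqv hqu hqk))
  · exact Or.inr (mem_Un_xz (mem_Phi_of hu dom_xzy hx hz hy hqv hqu hqk))
  · exact Or.inl (mem_Un_yz (mem_Phi_of hv dom_yzx hy hz hx hqu hqv hqk))
  · exact Or.inr (mem_Un_yz (mem_Phi_of hu dom_yzx hy hz hx hqv hqu hqk))
  · exact Or.inl (mem_Un_xz (mem_Phi_of hv dom_xzy hx hz hy hqu hqv hqk))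
  · exact Or.inl (mem_Un_xy (mem_Phi_of hv dom_xyz hx hy hz hqu hqv hqk))
  · exact Or.inl (mem_Un_D (mem_PhiD_of hv hx hy hz hqu hqk))

lemma caseC_empty {S : Finset Pt} {k : ℕ} {α β γ : Pt → ℝ} {p m w : Pt}
    (hwS : w ∈ S) (hwp : w ≠ p) (hwm : w ≠ m)
    (hpα : ∀ b ∈ S, b ≠ p → α p < α b)
    (hpβ : ∀ b ∈ S, b ≠ p → β p < β b)
    (hwγ : ∀ b ∈ S, b ≠ p → b ≠ m → b ≠ w → γ w < γ b) :
    Phi S k β γ α w = ∅ ∨ Phi S k α γ β w = ∅ := by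
  by_contra hcon
  push_neg at hcon
  obtain ⟨h1ne, h2ne⟩ := hcon
  obtain ⟨v1, hv1⟩ := h1ne
  obtain ⟨v2, hv2⟩ := h2ne
  obtain ⟨hv1S, hβ1, hγ1, hα1, -⟩ := mem_Phi.mp hv1
  obtain ⟨hv2S, hα2, hγ2, hβ2, -⟩ := mem_Phi.mp hv2
  have hv1w : v1 ≠ w := fun he => absurd hγ1 (he ▸ lt_irrefl _)
  have hv2w : v2 ≠ w := fun he => absurd hγ2 (he ▸ lt_irrefl _)
  have hv1pm : v1 = p ∨ v1 = m := by
    by_contra hc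
    push_neg at hc
    exact absurd hγ1 (not_lt.mpr (le_of_lt (hwγ v1 hv1S hc.1 hc.2 hv1w)))
  have hv2pm : v2 = p ∨ v2 = m := by
    by_contra hc
    push_neg at hc
    exact absurd hγ2 (not_lt.mpr (le_of_lt (hwγ v2 hv2S hc.1 hc.2 hv2w)))
  have hv1m : v1 = m := by
    rcases hv1pm with he | he
    · exact absurd hα1 (not_lt.mpr (le_of_lt (he ▸ hpα w hwS hwp)))
    · exact he
  have hαm : α w < α m := hv1m ▸ hα1
  rcases hv2pm with he | he
  · exact absurd hβ2 (not_lt.mpr (le_of_lt (he ▸ hpβ w hwS hwp)))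
  · exact absurd (he ▸ hα2) (not_lt.mpr (le_of_lt hαm))

lemma two_le_domBy {S : Finset Pt} {p u : Pt} (hu : u ∈ S) (hp : p ∈ S) (hpu : p ≠ u)
    (h1 : px p ≤ px u) (h2 : py p ≤ py u) (h3 : pz p ≤ pz u) :
    2 ≤ (domBy S u).card := by
  have hpmem : p ∈ domBy S u := Finset.mem_filter.mpr ⟨hp, h1, h2, h3⟩
  have humem : u ∈ domBy S u := Finset.mem_filter.mpr ⟨hu, le_refl _, le_refl _, le_refl _⟩
  have hsub : ({p, u} : Finset Pt) ⊆ domBy S u := by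
    intro x hx
    rcases Finset.mem_insert.mp hx with he | he
    · exact he ▸ hpmem
    · exact (Finset.mem_singleton.mp he) ▸ humem
  have := Finset.card_le_card hsub
  rwa [Finset.card_pair hpu] at this

end GkAux

open GkAux in
/-- The graph `G_k(S)` has at most `3(k−1)n − 6` edges, where `n = |S| ≥ 3`,
`2 ≤ k ≤ n`, no two points of `S` share a coordinate, and the edges of `G_k(S)`
are the pairs `{u,v}` of distinct points of `S` dominated by some common point
`q ∈ ℝ³` which dominates at most `k` points of `S` in total. -/
theorem Gk_edge_bound (S : Finset (ℝ × ℝ × ℝ))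
    (hgen : ∀ u ∈ S, ∀ v ∈ S, u ≠ v →
      u.1 ≠ v.1 ∧ u.2.1 ≠ v.2.1 ∧ u.2.2 ≠ v.2.2)
    (hn : 3 ≤ S.card) (k : ℕ) (hk2 : 2 ≤ k) (hkn : k ≤ S.card) :
    ((S.powerset).filter (fun e =>
        e.card = 2 ∧ ∃ q : ℝ × ℝ × ℝ, (∀ u ∈ e, Dominates q u) ∧
          (S.filter (fun w => Dominates q w)).card ≤ k)).card
      ≤ 3 * (k - 1) * S.card - 6 := by
  classical
  have hk1 : 1 ≤ k := by omega
  have hSne : S.Nonempty := Finset.card_pos.mp (by omega)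
  -- Step 1: the edge set injects into the union of charging sets
  set T : Finset (Pt × Pt) := S.biUnion (fun u => (Un S k u).image (fun v => (u, v))) with hT
  have hE1 : ((S.powerset).filter (fun e =>
      e.card = 2 ∧ ∃ q : ℝ × ℝ × ℝ, (∀ u ∈ e, Dominates q u) ∧
        (S.filter (fun w => Dominates q w)).card ≤ k)).card ≤ T.card := by
    apply Finset.card_le_card_of_surjOn (fun pr : Pt × Pt => ({pr.1, pr.2} : Finset Pt))
    intro e he
    rw [Finset.mem_coe, Finset.mem_filter] at he
    obtain ⟨hpow, hc2, q, hdq, hqk⟩ := he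
    obtain ⟨x, y, hxy, rfl⟩ := Finset.card_eq_two.mp hc2
    have hsub := Finset.mem_powerset.mp hpow
    have hxS : x ∈ S := hsub (Finset.mem_insert_self _ _)
    have hyS : y ∈ S := hsub (Finset.mem_insert_of_mem (Finset.mem_singleton_self _))
    have hd := hgen x hxS y hyS hxy
    have hqx : Dominates q x := hdq x (Finset.mem_insert_self _ _)
    have hqy : Dominates q y := hdq y (Finset.mem_insert_of_mem (Finset.mem_singleton_self _))
    rcases winner hxS hyS hd.1 hd.2.1 hd.2.2 hqx hqy hqk with hm | hm
    · exact ⟨(x, y), Finset.mem_coe.mpr (Finset.mem_biUnion.mpr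
        ⟨x, hxS, Finset.mem_image.mpr ⟨y, hm, rfl⟩⟩), rfl⟩
    · exact ⟨(y, x), Finset.mem_coe.mpr (Finset.mem_biUnion.mpr
        ⟨y, hyS, Finset.mem_image.mpr ⟨x, hm, rfl⟩⟩), Finset.pair_comm y x⟩
  have hE2 : T.card ≤ ∑ u ∈ S, phi S k u :=
    le_trans Finset.card_biUnion_le (Finset.sum_le_sum fun u _ =>
      le_trans Finset.card_image_le card_Un_le)
  -- Step 2: generic per-vertex bound
  have hgen3 : ∀ u ∈ S, phi S k u ≤ 3 * (k - 1) := by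
    intro u hu
    have h1 := L1 (S := S) (k := k) hu dom_xyz hk1
    have h2 := Phi_card_le (S := S) (k := k) hu dom_yzx hk1
    have h3 := Phi_card_le (S := S) (k := k) hu dom_xzy hk1
    unfold phi
    omega
  -- Step 3: minima and strict minima
  obtain ⟨a, haS, haMin⟩ := Finset.exists_min_image S px hSne
  obtain ⟨b, hbS, hbMin⟩ := Finset.exists_min_image S py hSne
  obtain ⟨c, hcS, hcMin⟩ := Finset.exists_min_image S pz hSne
  have hax : ∀ e ∈ S, e ≠ a → px a < px e := fun e he hne =>
    lt_of_le_of_ne (haMin e he) ((hgen a haS e he (Ne.symm hne)).1)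
  have hby : ∀ e ∈ S, e ≠ b → py b < py e := fun e he hne =>
    lt_of_le_of_ne (hbMin e he) ((hgen b hbS e he (Ne.symm hne)).2.1)
  have hcz : ∀ e ∈ S, e ≠ c → pz c < pz e := fun e he hne =>
    lt_of_le_of_ne (hcMin e he) ((hgen c hcS e he (Ne.symm hne)).2.2)
  -- Step 4: three special vertices with total savings at least 6
  have hspec : ∃ u1 ∈ S, ∃ u2 ∈ S, ∃ u3 ∈ S, u1 ≠ u2 ∧ u1 ≠ u3 ∧ u2 ≠ u3 ∧
      phi S k u1 + phi S k u2 + phi S k u3 + 6 ≤ 9 * (k - 1) := by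
    by_cases hab : a = b
    · by_cases hac : a = c
      · -- Case B : a is the global minimum
        subst hab
        subst hac
        have hp0 : phi S k a = 0 := by
          have e1 : PhiD S k a = ∅ := PhiD_empty_x hax
          have e2 : Phi S k px py pz a = ∅ := Phi_empty_f hax
          have e3 : Phi S k py pz px a = ∅ := Phi_empty_f hby
          have e4 : Phi S k px pz py a = ∅ := Phi_empty_f hax
          unfold phi
          rw [e1, e2, e3, e4]
          simp
        have h2c : 1 < (S.erase a).card := by
          rw [Finset.card_erase_of_mem haS]; omega
        obtain ⟨v2, hv2, v3, hv3, h23⟩ := Finset.one_lt_card.mp h2c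
        have key : ∀ x ∈ S.erase a, phi S k x + 5 ≤ 3 * k := by
          intro x hx
          obtain ⟨hxa, hxS⟩ := Finset.mem_erase.mp hx
          have hr : 2 ≤ (domBy S x).card := two_le_domBy hxS haS (Ne.symm hxa)
            (le_of_lt (hax x hxS hxa)) (le_of_lt (hby x hxS hxa)) (le_of_lt (hcz x hxS hxa))
          have h1 := L1 (S := S) (k := k) hxS dom_xyz hk1
          have h2 := Phi_card_le2 (S := S) (k := k) hxS dom_yzx hr hk2
          have h3 := Phi_card_le2 (S := S) (k := k) hxS dom_xzy hr hk2
          unfold phi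
          omega
        obtain ⟨hv2a, hv2S⟩ := Finset.mem_erase.mp hv2
        obtain ⟨hv3a, hv3S⟩ := Finset.mem_erase.mp hv3
        have k2 := key v2 hv2
        have k3 := key v3 hv3
        exact ⟨a, haS, v2, hv2S, v3, hv3S, Ne.symm hv2a, Ne.symm hv3a, h23, by omega⟩
      · -- Case C1 : a = b is min in x and y, c is min in z, a ≠ c
        subst hab
        have hca : c ≠ a := fun h => hac h.symm
        have hmem_c : c ∈ S.erase a := Finset.mem_erase.mpr ⟨hca, hcS⟩
        have h1c : 1 ≤ ((S.erase a).erase c).card := by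
          rw [Finset.card_erase_of_mem hmem_c, Finset.card_erase_of_mem haS]; omega
        obtain ⟨w, hwmem, hwMin⟩ :=
          Finset.exists_min_image ((S.erase a).erase c) pz (Finset.card_pos.mp h1c)
        obtain ⟨hwc, hwmem2⟩ := Finset.mem_erase.mp hwmem
        obtain ⟨hwa, hwS⟩ := Finset.mem_erase.mp hwmem2
        have hwz : ∀ e ∈ S, e ≠ a → e ≠ c → e ≠ w → pz w < pz e := by
          intro e he hea hec hew
          have hemem : e ∈ (S.erase a).erase c :=
            Finset.mem_erase.mpr ⟨hec, Finset.mem_erase.mpr ⟨hea, he⟩⟩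
          exact lt_of_le_of_ne (hwMin e hemem) ((hgen w hwS e he (Ne.symm hew)).2.2)
        have hp0 : phi S k a = 0 := by
          have e1 : PhiD S k a = ∅ := PhiD_empty_x hax
          have e2 : Phi S k px py pz a = ∅ := Phi_empty_f hax
          have e3 : Phi S k py pz px a = ∅ := Phi_empty_f hby
          have e4 : Phi S k px pz py a = ∅ := Phi_empty_f hax
          unfold phi
          rw [e1, e2, e3, e4]
          simp
        have hpm : phi S k c + 1 ≤ k := by
          have e1 : PhiD S k c = ∅ := PhiD_empty_z hcz
          have e3 : Phi S k py pz px c = ∅ := Phi_empty_g hcz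
          have e4 : Phi S k px pz py c = ∅ := Phi_empty_g hcz
          have h2 := Phi_card_le (S := S) (k := k) hcS dom_xyz hk1
          unfold phi
          rw [e1, e3, e4]
          simp only [Finset.card_empty]
          omega
        have hpw : phi S k w + 2 ≤ 2 * k := by
          rcases caseC_empty (k := k) hwS hwa hwc hax hby hwz with hE | hE
          · have h1 := L1 (S := S) (k := k) hwS dom_xyz hk1
            have h3 := Phi_card_le (S := S) (k := k) hwS dom_xzy hk1
            unfold phi
            rw [hE]
            simp only [Finset.card_empty]
            omega
          · have h1 := L1 (S := S) (k := k) hwS dom_xyz hk1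
            have h3 := Phi_card_le (S := S) (k := k) hwS dom_yzx hk1
            unfold phi
            rw [hE]
            simp only [Finset.card_empty]
            omega
        exact ⟨a, haS, c, hcS, w, hwS, hac, Ne.symm hwa, Ne.symm hwc, by omega⟩
    · by_cases hac : a = c
      · -- Case C2 : a = c is min in x and z, b is min in y
        subst hac
        have hba : b ≠ a := fun h => hab h.symm
        have hmem_b : b ∈ S.erase a := Finset.mem_erase.mpr ⟨hba, hbS⟩
        have h1c : 1 ≤ ((S.erase a).erase b).card := by
          rw [Finset.card_erase_of_mem hmem_b, Finset.card_erase_of_mem haS]; omega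
        obtain ⟨w, hwmem, hwMin⟩ :=
          Finset.exists_min_image ((S.erase a).erase b) py (Finset.card_pos.mp h1c)
        obtain ⟨hwb, hwmem2⟩ := Finset.mem_erase.mp hwmem
        obtain ⟨hwa, hwS⟩ := Finset.mem_erase.mp hwmem2
        have hwy : ∀ e ∈ S, e ≠ a → e ≠ b → e ≠ w → py w < py e := by
          intro e he hea heb hew
          have hemem : e ∈ (S.erase a).erase b :=
            Finset.mem_erase.mpr ⟨heb, Finset.mem_erase.mpr ⟨hea, he⟩⟩
          exact lt_of_le_of_ne (hwMin e hemem) ((hgen w hwS e he (Ne.symm hew)).2.1)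
        have hp0 : phi S k a = 0 := by
          have e1 : PhiD S k a = ∅ := PhiD_empty_x hax
          have e2 : Phi S k px py pz a = ∅ := Phi_empty_f hax
          have e3 : Phi S k py pz px a = ∅ := Phi_empty_g hcz
          have e4 : Phi S k px pz py a = ∅ := Phi_empty_f hax
          unfold phi
          rw [e1, e2, e3, e4]
          simp
        have hpm : phi S k b + 1 ≤ k := by
          have e1 : PhiD S k b = ∅ := PhiD_empty_y hby
          have e2 : Phi S k px py pz b = ∅ := Phi_empty_g hby
          have e3 : Phi S k py pz px b = ∅ := Phi_empty_f hby
          have h2 := Phi_card_le (S := S) (k := k) hbS dom_xzy hk1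
          unfold phi
          rw [e1, e2, e3]
          simp only [Finset.card_empty]
          omega
        have hpw : phi S k w + 2 ≤ 2 * k := by
          rcases caseC_empty (k := k) (α := pz) (β := px) (γ := py)
            hwS hwa hwb hcz hax hwy with hE | hE
          · have h1 := L1 (S := S) (k := k) hwS dom_yzx hk1
            have h3 := Phi_card_le (S := S) (k := k) hwS dom_xzy hk1
            unfold phi
            rw [hE]
            simp only [Finset.card_empty]
            omega
          · have hE2 : Phi S k py pz px w = ∅ := by rw [Phi_comm]; exact hE
            have h1 := L1 (S := S) (k := k) hwS dom_xyz hk1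
            have h3 := Phi_card_le (S := S) (k := k) hwS dom_xzy hk1
            unfold phi
            rw [hE2]
            simp only [Finset.card_empty]
            omega
        exact ⟨a, haS, b, hbS, w, hwS, hab, Ne.symm hwa, Ne.symm hwb, by omega⟩
      · by_cases hbc : b = c
        · -- Case C3 : b = c is min in y and z, a is min in x
          subst hbc
          have hba : b ≠ a := fun h => hab h.symm
          have hmem_a : a ∈ S.erase b := Finset.mem_erase.mpr ⟨hab, haS⟩
          have h1c : 1 ≤ ((S.erase b).erase a).card := by
            rw [Finset.card_erase_of_mem hmem_a, Finset.card_erase_of_mem hbS]; omega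
          obtain ⟨w, hwmem, hwMin⟩ :=
            Finset.exists_min_image ((S.erase b).erase a) px (Finset.card_pos.mp h1c)
          obtain ⟨hwa, hwmem2⟩ := Finset.mem_erase.mp hwmem
          obtain ⟨hwb, hwS⟩ := Finset.mem_erase.mp hwmem2
          have hwx : ∀ e ∈ S, e ≠ b → e ≠ a → e ≠ w → px w < px e := by
            intro e he heb hea hew
            have hemem : e ∈ (S.erase b).erase a :=
              Finset.mem_erase.mpr ⟨hea, Finset.mem_erase.mpr ⟨heb, he⟩⟩
            exact lt_of_le_of_ne (hwMin e hemem) ((hgen w hwS e he (Ne.symm hew)).1)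
          have hp0 : phi S k b = 0 := by
            have e1 : PhiD S k b = ∅ := PhiD_empty_y hby
            have e2 : Phi S k px py pz b = ∅ := Phi_empty_g hby
            have e3 : Phi S k py pz px b = ∅ := Phi_empty_f hby
            have e4 : Phi S k px pz py b = ∅ := Phi_empty_g hcz
            unfold phi
            rw [e1, e2, e3, e4]
            simp
          have hpm : phi S k a + 1 ≤ k := by
            have e1 : PhiD S k a = ∅ := PhiD_empty_x hax
            have e2 : Phi S k px py pz a = ∅ := Phi_empty_f hax
            have e4 : Phi S k px pz py a = ∅ := Phi_empty_f hax
            have h2 := Phi_card_le (S := S) (k := k) haS dom_yzx hk1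
            unfold phi
            rw [e1, e2, e4]
            simp only [Finset.card_empty]
            omega
          have hpw : phi S k w + 2 ≤ 2 * k := by
            rcases caseC_empty (k := k) (α := pz) (β := py) (γ := px)
              hwS hwb hwa hcz hby hwx with hE | hE
            · have hE2 : Phi S k px py pz w = ∅ := by rw [Phi_comm]; exact hE
              have h1 := L1 (S := S) (k := k) hwS dom_yzx hk1
              have h3 := Phi_card_le (S := S) (k := k) hwS dom_xzy hk1
              unfold phi
              rw [hE2]
              simp only [Finset.card_empty]
              omega
            · have hE2 : Phi S k px pz py w = ∅ := by rw [Phi_comm]; exact hE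
              have h1 := L1 (S := S) (k := k) hwS dom_xyz hk1
              have h3 := Phi_card_le (S := S) (k := k) hwS dom_yzx hk1
              unfold phi
              rw [hE2]
              simp only [Finset.card_empty]
              omega
          exact ⟨b, hbS, a, haS, w, hwS, hba, Ne.symm hwb, Ne.symm hwa, by omega⟩
        · -- Case A : a, b, c pairwise distinct
          have hpa : phi S k a + 1 ≤ k := by
            have e1 : PhiD S k a = ∅ := PhiD_empty_x hax
            have e2 : Phi S k px py pz a = ∅ := Phi_empty_f hax
            have e4 : Phi S k px pz py a = ∅ := Phi_empty_f hax
            have h2 := Phi_card_le (S := S) (k := k) haS dom_yzx hk1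
            unfold phi
            rw [e1, e2, e4]
            simp only [Finset.card_empty]
            omega
          have hpb : phi S k b + 1 ≤ k := by
            have e1 : PhiD S k b = ∅ := PhiD_empty_y hby
            have e2 : Phi S k px py pz b = ∅ := Phi_empty_g hby
            have e3 : Phi S k py pz px b = ∅ := Phi_empty_f hby
            have h2 := Phi_card_le (S := S) (k := k) hbS dom_xzy hk1
            unfold phi
            rw [e1, e2, e3]
            simp only [Finset.card_empty]
            omega
          have hpc : phi S k c + 1 ≤ k := by
            have e1 : PhiD S k c = ∅ := PhiD_empty_z hcz
            have e3 : Phi S k py pz px c = ∅ := Phi_empty_g hcz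
            have e4 : Phi S k px pz py c = ∅ := Phi_empty_g hcz
            have h2 := Phi_card_le (S := S) (k := k) hcS dom_xyz hk1
            unfold phi
            rw [e1, e3, e4]
            simp only [Finset.card_empty]
            omega
          exact ⟨a, haS, b, hbS, c, hcS, hab, hac, hbc, by omega⟩
  -- Step 5: combine
  obtain ⟨u1, hu1, u2, hu2, u3, hu3, h12, h13, h23, hTot⟩ := hspec
  have hsub3 : ({u1, u2, u3} : Finset Pt) ⊆ S := by
    intro x hx
    rcases Finset.mem_insert.mp hx with he | hx
    · exact he ▸ hu1
    · rcases Finset.mem_insert.mp hx with he | hx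
      · exact he ▸ hu2
      · exact (Finset.mem_singleton.mp hx) ▸ hu3
  have hc3 : ({u1, u2, u3} : Finset Pt).card = 3 := by
    rw [Finset.card_insert_of_notMem (by simp [h12, h13]),
      Finset.card_insert_of_notMem (by simp [h23]), Finset.card_singleton]
  have hsum3 : ∑ u ∈ ({u1, u2, u3} : Finset Pt), phi S k u
      = phi S k u1 + phi S k u2 + phi S k u3 := by
    rw [Finset.sum_insert (by simp [h12, h13]), Finset.sum_insert (by simp [h23]),
      Finset.sum_singleton, add_assoc]
  have hrest : ∑ u ∈ S \ {u1, u2, u3}, phi S k u ≤ (S.card - 3) * (3 * (k - 1)) := by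
    have hb := Finset.sum_le_card_nsmul (S \ {u1, u2, u3}) (phi S k) (3 * (k - 1))
      (fun x hx => hgen3 x (Finset.mem_sdiff.mp hx).1)
    rwa [Finset.card_sdiff_of_subset hsub3, hc3, smul_eq_mul] at hb
  have hsplit : (∑ u ∈ S \ {u1, u2, u3}, phi S k u)
      + (∑ u ∈ ({u1, u2, u3} : Finset Pt), phi S k u) = ∑ u ∈ S, phi S k u :=
    Finset.sum_sdiff hsub3
  have hfin : (∑ u ∈ S, phi S k u) + 6 ≤ 3 * (k - 1) * S.card := by
    obtain ⟨m, hm⟩ : ∃ m, S.card = m + 3 := ⟨S.card - 3, by omega⟩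
    have harith : (S.card - 3) * (3 * (k - 1)) + 9 * (k - 1) = 3 * (k - 1) * S.card := by
      rw [hm]
      have h3 : m + 3 - 3 = m := by omega
      rw [h3]
      ring
    rw [← hsplit, hsum3]
    omega
  exact Nat.le_sub_of_add_le (le_trans (Nat.add_le_add_right (le_trans hE1 hE2) 6) hfin)
end

section
/- Let S ⊂ ℝ³ be a finite set of points and let k ≥ 2. Then there exists a coloring f : S → Fin (6(k−1)) such that for every q ∈ ℝ³, the set e(q) contains at least min(|e(q)|, k) points with mutually distinct colors. (In the paper's notation: c₃(k) ≤ 6(k−1).) -/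
open scoped Classical

namespace ThreeDimPoly

lemma dominates_iff (q u : ℝ × ℝ × ℝ) : Dominates q u ↔ u ≤ q := by
  simp [Dominates, Prod.le_def, and_assoc]

/-- The set of points of `S` dominated by `q`. -/
noncomputable def eSet (S : Finset (ℝ × ℝ × ℝ)) (q : ℝ × ℝ × ℝ) : Finset (ℝ × ℝ × ℝ) :=
  S.filter (fun u => Dominates q u)

lemma mem_eSet {S : Finset (ℝ × ℝ × ℝ)} {q x : ℝ × ℝ × ℝ} :
    x ∈ eSet S q ↔ x ∈ S ∧ x ≤ q := by
  simp [eSet, dominates_iff]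

lemma eSet_mono {S : Finset (ℝ × ℝ × ℝ)} {u q : ℝ × ℝ × ℝ} (h : u ≤ q) :
    eSet S u ⊆ eSet S q := by
  intro x hx
  rw [mem_eSet] at hx ⊢
  exact ⟨hx.1, hx.2.trans h⟩

/-- coordinate projections -/
noncomputable def pj (i : Fin 3) (u : ℝ × ℝ × ℝ) : ℝ := ![u.1, u.2.1, u.2.2] i

lemma le_iff_pj {u v : ℝ × ℝ × ℝ} : u ≤ v ↔ ∀ i, pj i u ≤ pj i v := by
  constructor
  · intro h i
    obtain ⟨h1, h2, h3⟩ := (dominates_iff v u).mpr h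
    fin_cases i <;> simpa [pj]
  · intro h
    rw [← dominates_iff]
    exact ⟨by simpa [pj] using h 0, by simpa [pj] using h 1, by simpa [pj] using h 2⟩

lemma pj_sup (i : Fin 3) (u v : ℝ × ℝ × ℝ) : pj i (u ⊔ v) = pj i u ⊔ pj i v := by
  fin_cases i <;> simp [pj, Prod.sup_def]

/-- number of coordinates where `w` strictly beats `v` -/
noncomputable def cnt (w v : ℝ × ℝ × ℝ) : ℕ :=
  (Finset.univ.filter (fun i => pj i v < pj i w)).card

lemma cnt_add_cnt_le (w v : ℝ × ℝ × ℝ) : cnt w v + cnt v w ≤ 3 := by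
  have hd : Disjoint (Finset.univ.filter (fun i => pj i v < pj i w))
      (Finset.univ.filter (fun i => pj i w < pj i v)) := by
    rw [Finset.disjoint_left]
    intro i hi hi'
    simp only [Finset.mem_filter] at hi hi'
    exact absurd hi'.2 (not_lt.mpr hi.2.le)
  calc cnt w v + cnt v w
      = ((Finset.univ.filter (fun i => pj i v < pj i w)) ∪
         (Finset.univ.filter (fun i => pj i w < pj i v))).card :=
        (Finset.card_union_of_disjoint hd).symm
    _ ≤ Fintype.card (Fin 3) := Finset.card_le_univ _
    _ = 3 := by simp

lemma cnt_eq_zero {w v : ℝ × ℝ × ℝ} (h : cnt w v = 0) : w ≤ v := by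
  rw [le_iff_pj]
  intro i
  rw [cnt, Finset.card_eq_zero, Finset.filter_eq_empty_iff] at h
  exact not_lt.mp (h (Finset.mem_univ i))

lemma cnt_eq_one {w v : ℝ × ℝ × ℝ} (h : cnt w v = 1) :
    ∃ i, pj i v < pj i w ∧ ∀ j, j ≠ i → pj j w ≤ pj j v := by
  rw [cnt, Finset.card_eq_one] at h
  obtain ⟨i, hi⟩ := h
  refine ⟨i, ?_, ?_⟩
  · have : i ∈ Finset.univ.filter (fun i => pj i v < pj i w) := by
      rw [hi]; exact Finset.mem_singleton_self i
    simpa using this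
  · intro j hj
    by_contra hc
    have : j ∈ Finset.univ.filter (fun i => pj i v < pj i w) := by
      simp [not_le.mp hc]
    rw [hi, Finset.mem_singleton] at this
    exact hj this

section Graph

variable (S : Finset (ℝ × ℝ × ℝ)) (k : ℕ)

/-- the `k`-shallow neighborhood of `p` -/
noncomputable def NB (p : ℝ × ℝ × ℝ) : Finset (ℝ × ℝ × ℝ) :=
  S.filter (fun w => w ≠ p ∧ (eSet S (p ⊔ w)).card ≤ k)

/-- pairs charged at `v` -/
noncomputable def CV (v : ℝ × ℝ × ℝ) : Finset (ℝ × ℝ × ℝ) :=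
  S.filter (fun w => w ≠ v ∧ (eSet S (v ⊔ w)).card ≤ k ∧ cnt w v ≤ 1)

/-- points beating `v` exactly in coordinate `i` -/
noncomputable def FF (v : ℝ × ℝ × ℝ) (i : Fin 3) : Finset (ℝ × ℝ × ℝ) :=
  S.filter (fun w => (∀ j, j ≠ i → pj j w ≤ pj j v) ∧ pj i v < pj i w ∧
    (eSet S (v ⊔ w)).card ≤ k)

/-- points strictly below `v` -/
noncomputable def BB (v : ℝ × ℝ × ℝ) : Finset (ℝ × ℝ × ℝ) :=
  S.filter (fun w => w ≠ v ∧ w ≤ v ∧ (eSet S v).card ≤ k)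

lemma cv_cover (v : ℝ × ℝ × ℝ) :
    CV S k v ⊆ BB S k v ∪ FF S k v 0 ∪ FF S k v 1 ∪ FF S k v 2 := by
  intro w hw
  rw [CV, Finset.mem_filter] at hw
  obtain ⟨hwS, hwv, hcard, hcnt⟩ := hw
  rcases Nat.le_one_iff_eq_zero_or_eq_one.mp hcnt with h0 | h1
  · have hle : w ≤ v := cnt_eq_zero h0
    have : (eSet S v).card ≤ k := by
      rwa [sup_eq_left.mpr hle] at hcard
    simp only [Finset.mem_union]
    exact Or.inl (Or.inl (Or.inl (by rw [BB, Finset.mem_filter]; exact ⟨hwS, hwv, hle, this⟩)))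
  · obtain ⟨i, hlt, hle⟩ := cnt_eq_one h1
    have hmem : w ∈ FF S k v i := by
      rw [FF, Finset.mem_filter]; exact ⟨hwS, hle, hlt, hcard⟩
    simp only [Finset.mem_union]
    fin_cases i
    · exact Or.inl (Or.inl (Or.inr hmem))
    · exact Or.inl (Or.inr hmem)
    · exact Or.inr hmem

lemma BB_card (v : ℝ × ℝ × ℝ) (hv : v ∈ S) : (BB S k v).card + 1 ≤ (eSet S v).card := by
  have hsub : BB S k v ⊆ (eSet S v).erase v := by
    intro w hw
    rw [BB, Finset.mem_filter] at hw
    exact Finset.mem_erase.mpr ⟨hw.2.1, mem_eSet.mpr ⟨hw.1, hw.2.2.1⟩⟩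
  have hvmem : v ∈ eSet S v := mem_eSet.mpr ⟨hv, le_refl v⟩
  have h1 : (BB S k v).card ≤ (eSet S v).card - 1 := by
    calc (BB S k v).card ≤ ((eSet S v).erase v).card := Finset.card_le_card hsub
      _ = (eSet S v).card - 1 := Finset.card_erase_of_mem hvmem
  have h2 : 1 ≤ (eSet S v).card := Finset.card_pos.mpr ⟨v, hvmem⟩
  omega

lemma BB_nonempty (v : ℝ × ℝ × ℝ) (h : (BB S k v).Nonempty) : (eSet S v).card ≤ k := by
  obtain ⟨w, hw⟩ := h
  rw [BB, Finset.mem_filter] at hw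
  exact hw.2.2.2

lemma FF_bound (v : ℝ × ℝ × ℝ) (hv : v ∈ S) (i : Fin 3) (hne : (FF S k v i).Nonempty) :
    (FF S k v i).card + (eSet S v).card ≤ k := by
  obtain ⟨wm, hwm, hmax⟩ := Finset.exists_max_image (FF S k v i) (pj i) hne
  have hwm' := hwm
  rw [FF, Finset.mem_filter] at hwm'
  have hsub : FF S k v i ∪ eSet S v ⊆ eSet S (v ⊔ wm) := by
    intro x hx
    rcases Finset.mem_union.mp hx with hx | hx
    · have hx' := hx
      rw [FF, Finset.mem_filter] at hx'
      refine mem_eSet.mpr ⟨hx'.1, le_iff_pj.mpr fun j => ?_⟩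
      rw [pj_sup]
      by_cases hj : j = i
      · subst hj
        exact le_sup_of_le_right (hmax x hx)
      · exact le_sup_of_le_left (hx'.2.1 j hj)
    · exact eSet_mono le_sup_left hx
  have hdisj : Disjoint (FF S k v i) (eSet S v) := by
    rw [Finset.disjoint_left]
    intro x hx hx'
    rw [FF, Finset.mem_filter] at hx
    have : pj i x ≤ pj i v := le_iff_pj.mp (mem_eSet.mp hx').2 i
    exact absurd hx.2.2.1 (not_lt.mpr this)
  calc (FF S k v i).card + (eSet S v).card
      = (FF S k v i ∪ eSet S v).card := (Finset.card_union_of_disjoint hdisj).symm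
    _ ≤ (eSet S (v ⊔ wm)).card := Finset.card_le_card hsub
    _ ≤ k := hwm'.2.2.2

lemma cv_facts (v : ℝ × ℝ × ℝ) (hv : v ∈ S) :
    (CV S k v).card ≤ (BB S k v).card + ((FF S k v 0).card + (FF S k v 1).card
      + (FF S k v 2).card) := by
  calc (CV S k v).card
      ≤ (BB S k v ∪ FF S k v 0 ∪ FF S k v 1 ∪ FF S k v 2).card :=
        Finset.card_le_card (cv_cover S k v)
    _ ≤ (BB S k v ∪ FF S k v 0 ∪ FF S k v 1).card + (FF S k v 2).card :=
        Finset.card_union_le _ _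
    _ ≤ (BB S k v ∪ FF S k v 0).card + (FF S k v 1).card + (FF S k v 2).card := by
        have := Finset.card_union_le (BB S k v ∪ FF S k v 0) (FF S k v 1)
        omega
    _ ≤ (BB S k v).card + (FF S k v 0).card + (FF S k v 1).card + (FF S k v 2).card := by
        have := Finset.card_union_le (BB S k v) (FF S k v 0)
        omega
    _ = _ := by ring

lemma ff_alt (v : ℝ × ℝ × ℝ) (hv : v ∈ S) (i : Fin 3) :
    (FF S k v i).card = 0 ∨ (FF S k v i).card + (eSet S v).card ≤ k := by
  rcases Finset.eq_empty_or_nonempty (FF S k v i) with h | h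
  · left; simp [h]
  · right; exact FF_bound S k v hv i h

lemma bb_alt (v : ℝ × ℝ × ℝ) : (BB S k v).card = 0 ∨ (eSet S v).card ≤ k := by
  rcases Finset.eq_empty_or_nonempty (BB S k v) with h | h
  · left; simp [h]
  · right; exact BB_nonempty S k v h

lemma cv_le_three (v : ℝ × ℝ × ℝ) (hv : v ∈ S) (hk : 2 ≤ k) :
    (CV S k v).card ≤ 3 * (k - 1) := by
  have h1 := cv_facts S k v hv
  have h2 := BB_card S k v hv
  have h3 := ff_alt S k v hv 0
  have h4 := ff_alt S k v hv 1
  have h5 := ff_alt S k v hv 2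
  have h6 := bb_alt S k v
  omega

lemma cv_le_two (v : ℝ × ℝ × ℝ) (hv : v ∈ S) (hk : 2 ≤ k)
    (h0 : FF S k v 0 = ∅) : (CV S k v).card ≤ 2 * (k - 1) := by
  have h1 := cv_facts S k v hv
  have h2 := BB_card S k v hv
  have h4 := ff_alt S k v hv 1
  have h5 := ff_alt S k v hv 2
  have h6 := bb_alt S k v
  have h0' : (FF S k v 0).card = 0 := by simp [h0]
  omega

/-- all charged ordered pairs -/
noncomputable def CC : Finset ((ℝ × ℝ × ℝ) × (ℝ × ℝ × ℝ)) :=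
  S.biUnion (fun v => (CV S k v).image (fun w => (v, w)))

/-- all shallow ordered pairs -/
noncomputable def DD : Finset ((ℝ × ℝ × ℝ) × (ℝ × ℝ × ℝ)) :=
  S.biUnion (fun p => (NB S k p).image (fun w => (p, w)))

lemma biUnion_card (T : (ℝ × ℝ × ℝ) → Finset (ℝ × ℝ × ℝ)) :
    (S.biUnion (fun v => (T v).image (fun w => (v, w)))).card
      = ∑ v ∈ S, (T v).card := by
  rw [Finset.card_biUnion]
  · refine Finset.sum_congr rfl fun v _ => ?_
    exact Finset.card_image_of_injective _ (fun a b h => by simpa using h)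
  · intro x hx y hy hxy
    rw [Function.onFun, Finset.disjoint_left]
    intro a ha ha'
    simp only [Finset.mem_image] at ha ha'
    obtain ⟨w, _, rfl⟩ := ha
    obtain ⟨w', _, h⟩ := ha'
    exact hxy (by simpa using (congrArg Prod.fst h).symm)

lemma DD_card : (DD S k).card = ∑ p ∈ S, (NB S k p).card := biUnion_card S (NB S k)

lemma CC_card : (CC S k).card = ∑ v ∈ S, (CV S k v).card := biUnion_card S (CV S k)

lemma DD_subset : DD S k ⊆ CC S k ∪ (CC S k).image Prod.swap := by
  intro x hx
  rw [DD, Finset.mem_biUnion] at hx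
  obtain ⟨p, hp, hx⟩ := hx
  rw [Finset.mem_image] at hx
  obtain ⟨w, hw, rfl⟩ := hx
  rw [NB, Finset.mem_filter] at hw
  obtain ⟨hwS, hwp, hcard⟩ := hw
  by_cases hc : cnt w p ≤ 1
  · apply Finset.mem_union_left
    rw [CC, Finset.mem_biUnion]
    exact ⟨p, hp, Finset.mem_image.mpr ⟨w, by
      rw [CV, Finset.mem_filter]; exact ⟨hwS, hwp, hcard, hc⟩, rfl⟩⟩
  · apply Finset.mem_union_right
    rw [Finset.mem_image]
    refine ⟨(w, p), ?_, rfl⟩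
    rw [CC, Finset.mem_biUnion]
    refine ⟨w, hwS, Finset.mem_image.mpr ⟨p, ?_, rfl⟩⟩
    rw [CV, Finset.mem_filter]
    have hcnt : cnt p w ≤ 1 := by
      have := cnt_add_cnt_le w p
      omega
    refine ⟨hp, Ne.symm hwp, ?_, hcnt⟩
    rwa [sup_comm]

lemma exists_low_degree (hk : 2 ≤ k) (hS : S.Nonempty) :
    ∃ p ∈ S, (NB S k p).card < 6 * (k - 1) := by
  by_contra hcon
  push_neg at hcon
  -- lower bound on the sum
  have hlow : 6 * (k - 1) * S.card ≤ ∑ p ∈ S, (NB S k p).card := by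
    calc 6 * (k - 1) * S.card = S.card * (6 * (k - 1)) := by ring
      _ = ∑ _p ∈ S, 6 * (k - 1) := by rw [Finset.sum_const, smul_eq_mul]
      _ ≤ ∑ p ∈ S, (NB S k p).card := Finset.sum_le_sum fun p hp => hcon p hp
  -- upper bound
  obtain ⟨vm, hvm, hvmax⟩ := Finset.exists_max_image S (pj 0) hS
  have hF0 : FF S k vm 0 = ∅ := by
    rw [FF, Finset.filter_eq_empty_iff]
    intro w hw
    intro hcontra
    exact absurd hcontra.2.1 (not_lt.mpr (hvmax w hw))
  have hup : ∑ v ∈ S, (CV S k v).card ≤ 2 * (k - 1) + (S.card - 1) * (3 * (k - 1)) := by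
    rw [← Finset.add_sum_erase S _ hvm]
    have h1 : (CV S k vm).card ≤ 2 * (k - 1) := cv_le_two S k vm hvm hk hF0
    have h2 : ∑ v ∈ S.erase vm, (CV S k v).card ≤ (S.erase vm).card * (3 * (k - 1)) := by
      have := Finset.sum_le_card_nsmul (S.erase vm) (fun v => (CV S k v).card) (3 * (k - 1))
        (fun v hv => cv_le_three S k v (Finset.mem_of_mem_erase hv) hk)
      simpa [smul_eq_mul] using this
    have h3 : (S.erase vm).card = S.card - 1 := Finset.card_erase_of_mem hvm
    rw [h3] at h2
    omega
  have hDC : (DD S k).card ≤ 2 * (CC S k).card := by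
    calc (DD S k).card ≤ (CC S k ∪ (CC S k).image Prod.swap).card :=
          Finset.card_le_card (DD_subset S k)
      _ ≤ (CC S k).card + ((CC S k).image Prod.swap).card := Finset.card_union_le _ _
      _ ≤ 2 * (CC S k).card := by
          have := Finset.card_image_le (s := CC S k) (f := Prod.swap)
          omega
  have hn : 1 ≤ S.card := Finset.card_pos.mpr hS
  obtain ⟨m, hm⟩ : ∃ m, S.card = m + 1 := ⟨S.card - 1, by omega⟩
  have hchain : 6 * (k - 1) * S.card ≤ 2 * (2 * (k - 1) + (S.card - 1) * (3 * (k - 1))) := by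
    calc 6 * (k - 1) * S.card ≤ ∑ p ∈ S, (NB S k p).card := hlow
      _ = (DD S k).card := (DD_card S k).symm
      _ ≤ 2 * (CC S k).card := hDC
      _ = 2 * ∑ v ∈ S, (CV S k v).card := by rw [CC_card]
      _ ≤ 2 * (2 * (k - 1) + (S.card - 1) * (3 * (k - 1))) := by omega
  rw [hm] at hchain
  have hq : m + 1 - 1 = m := by omega
  rw [hq] at hchain
  have hexp : 6 * (k - 1) * (m + 1) = 6 * ((k-1) * m) + 6 * (k-1) := by ring
  have hexp2 : 2 * (2 * (k - 1) + m * (3 * (k - 1))) = 6 * ((k-1) * m) + 4 * (k-1) := by ring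
  rw [hexp, hexp2] at hchain
  omega

end Graph

/-- Main induction. -/
theorem main_aux (k : ℕ) (hk : 2 ≤ k) (S : Finset (ℝ × ℝ × ℝ)) :
    ∃ f : ℝ × ℝ × ℝ → Fin (6 * (k - 1)),
      ∀ q : ℝ × ℝ × ℝ, min (eSet S q).card k ≤ ((eSet S q).image f).card := by
  induction S using Finset.strongInduction with
  | _ S ih =>
  rcases Finset.eq_empty_or_nonempty S with rfl | hS
  · refine ⟨fun _ => ⟨0, by omega⟩, fun q => ?_⟩
    simp [eSet]
  · obtain ⟨p, hp, hdeg⟩ := exists_low_degree S k hk hS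
    obtain ⟨f', hf'⟩ := ih (S.erase p) (Finset.erase_ssubset hp)
    have hA : ((NB S k p).image f').card < 6 * (k - 1) :=
      lt_of_le_of_lt Finset.card_image_le hdeg
    have hex : ∃ c : Fin (6 * (k - 1)), c ∉ (NB S k p).image f' := by
      by_contra hcon
      push_neg at hcon
      have : (Finset.univ : Finset (Fin (6 * (k - 1)))) ⊆ (NB S k p).image f' :=
        fun c _ => hcon c
      have := Finset.card_le_card this
      simp only [Finset.card_univ, Fintype.card_fin] at this
      omega
    obtain ⟨c, hc⟩ := hex
    refine ⟨Function.update f' p c, fun q => ?_⟩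
    have hE' : eSet (S.erase p) q = (eSet S q).erase p := by
      ext x
      simp only [mem_eSet, Finset.mem_erase]
      tauto
    by_cases hq : p ∈ eSet S q
    · -- p is in the range
      have hpq : p ≤ q := (mem_eSet.mp hq).2
      have hins : eSet S q = insert p ((eSet S q).erase p) := (Finset.insert_erase hq).symm
      have himg : (eSet S q).image (Function.update f' p c)
          = insert c (((eSet S q).erase p).image f') := by
        conv_lhs => rw [hins]
        rw [Finset.image_insert, Function.update_self]
        congr 1
        apply Finset.image_congr
        intro x hx
        exact Function.update_of_ne (Finset.mem_erase.mp hx).1 _ _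
      have hIH := hf' q
      rw [hE'] at hIH
      have hcarde : ((eSet S q).erase p).card = (eSet S q).card - 1 :=
        Finset.card_erase_of_mem hq
      have hcard1 : 1 ≤ (eSet S q).card := Finset.card_pos.mpr ⟨p, hq⟩
      rw [himg]
      by_cases hsmall : (eSet S q).card ≤ k
      · -- fresh color
        have hfresh : c ∉ ((eSet S q).erase p).image f' := by
          intro hmem
          rw [Finset.mem_image] at hmem
          obtain ⟨w, hw, hwc⟩ := hmem
          rw [Finset.mem_erase, mem_eSet] at hw
          apply hc
          rw [Finset.mem_image]
          refine ⟨w, ?_, hwc⟩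
          rw [NB, Finset.mem_filter]
          refine ⟨hw.2.1, hw.1, ?_⟩
          calc (eSet S (p ⊔ w)).card ≤ (eSet S q).card :=
                Finset.card_le_card (eSet_mono (sup_le hpq hw.2.2))
            _ ≤ k := hsmall
        rw [Finset.card_insert_of_notMem hfresh]
        omega
      · -- already k colors below
        have : min (eSet S q).card k = k := by omega
        rw [this]
        have hk' : k ≤ (((eSet S q).erase p).image f').card := by
          have : min ((eSet S q).erase p).card k = k := by omega
          omega
        calc k ≤ (((eSet S q).erase p).image f').card := hk'
          _ ≤ (insert c (((eSet S q).erase p).image f')).card :=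
              Finset.card_le_card (Finset.subset_insert _ _)
    · -- p not in range: nothing changed
      have heq : eSet (S.erase p) q = eSet S q := by
        rw [hE', Finset.erase_eq_of_notMem hq]
      have himg : (eSet S q).image (Function.update f' p c) = (eSet S q).image f' := by
        apply Finset.image_congr
        intro x hx
        have : x ≠ p := fun h => hq (h ▸ hx)
        exact Function.update_of_ne this _ _
      rw [himg]
      have := hf' q
      rwa [heq] at this

end ThreeDimPoly

/-- `c₃(k) ≤ 6(k−1)`: every finite set `S ⊆ ℝ³` can be colored with `6(k−1)`
colors so that for every `q ∈ ℝ³`, the set `e(q)` of points of `S` dominated by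
`q` contains at least `min (|e(q)|, k)` points with mutually distinct colors. -/
theorem three_dim_polychromatic (S : Finset (ℝ × ℝ × ℝ)) (k : ℕ) (hk : 2 ≤ k) :
    ∃ f : ℝ × ℝ × ℝ → Fin (6 * (k - 1)),
      ∀ q : ℝ × ℝ × ℝ,
        min (S.filter (fun u => Dominates q u)).card k ≤
          ((S.filter (fun u => Dominates q u)).image f).card := by
  obtain ⟨f, hf⟩ := ThreeDimPoly.main_aux k hk S
  exact ⟨f, fun q => by simpa [ThreeDimPoly.eSet] using hf q⟩
end

section
/- Let Q ⊆ ℝ² be a range with at least three distinct directions, and let k ≥ 2. Then there exists a finite set S of homothets of Q such that for every m < 4·⌊k/2⌋ and every coloring f : S → Fin m, there exists a point p ∈ ℝ² covered by exactly r members of S such that the number of distinct colors among the members of S containing p is strictly less than min(r, k). (In the paper's notation: c̄_Q(k) ≥ 4⌊k/2⌋.) -/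
open scoped Classical

/-- `R` is a homothet of `Q`. -/
def IsHomothet (Q R : Set (ℝ × ℝ)) : Prop :=
  ∃ t : ℝ × ℝ, ∃ l : ℝ, 0 < l ∧ R = homothet Q t l

/-- `v` is a unit outer normal vector of `Q` at `p`. -/
def IsNormalAt (Q : Set (ℝ × ℝ)) (p v : ℝ × ℝ) : Prop :=
  v.1 ^ 2 + v.2 ^ 2 = 1 ∧ ∀ x ∈ Q, (x.1 - p.1) * v.1 + (x.2 - p.2) * v.2 ≤ 0

/-- `Q` has at least three distinct directions: there are three boundary points at
which the normal is well-defined (unique) and the three normals are pairwise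
linearly independent. -/
def HasThreeDirections (Q : Set (ℝ × ℝ)) : Prop :=
  ∃ p₁ p₂ p₃ v₁ v₂ v₃ : ℝ × ℝ,
    p₁ ∈ frontier Q ∧ p₂ ∈ frontier Q ∧ p₃ ∈ frontier Q ∧
    IsNormalAt Q p₁ v₁ ∧ (∀ w, IsNormalAt Q p₁ w → w = v₁) ∧
    IsNormalAt Q p₂ v₂ ∧ (∀ w, IsNormalAt Q p₂ w → w = v₂) ∧
    IsNormalAt Q p₃ v₃ ∧ (∀ w, IsNormalAt Q p₃ w → w = v₃) ∧
    v₁.1 * v₂.2 - v₁.2 * v₂.1 ≠ 0 ∧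
    v₁.1 * v₃.2 - v₁.2 * v₃.1 ≠ 0 ∧
    v₂.1 * v₃.2 - v₂.2 * v₃.1 ≠ 0

namespace DualLB

noncomputable section

/-- planar dot product -/
def dot (x y : ℝ × ℝ) : ℝ := x.1 * y.1 + x.2 * y.2

lemma dot_comm (x y : ℝ × ℝ) : dot x y = dot y x := by simp [dot]; ring

lemma dot_add_left (x y w : ℝ × ℝ) : dot (x + y) w = dot x w + dot y w := by
  simp [dot]; ring

lemma dot_sub_left (x y w : ℝ × ℝ) : dot (x - y) w = dot x w - dot y w := by
  simp [dot]; ring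

lemma dot_smul_left (c : ℝ) (x w : ℝ × ℝ) : dot (c • x) w = c * dot x w := by
  simp [dot, Prod.smul_fst, Prod.smul_snd]; ring

lemma dot_comb (a b : ℝ) (u v w : ℝ × ℝ) :
    dot (a • u + b • v) w = a * dot u w + b * dot v w := by
  rw [dot_add_left, dot_smul_left, dot_smul_left]

lemma dot_self_unit {w : ℝ × ℝ} (hw : w.1 ^ 2 + w.2 ^ 2 = 1) : dot w w = 1 := by
  simp [dot]; nlinarith

/-- Cauchy-Schwarz for unit vectors, via the Lagrange identity. -/
lemma abs_dot_le_one {x w : ℝ × ℝ} (hx : x.1 ^ 2 + x.2 ^ 2 = 1)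
    (hw : w.1 ^ 2 + w.2 ^ 2 = 1) : |dot x w| ≤ 1 := by
  have h : (dot x w) ^ 2 + (x.1 * w.2 - x.2 * w.1) ^ 2 = 1 := by
    have : (x.1 * w.1 + x.2 * w.2) ^ 2 + (x.1 * w.2 - x.2 * w.1) ^ 2
        = (x.1 ^ 2 + x.2 ^ 2) * (w.1 ^ 2 + w.2 ^ 2) := by ring
    simp only [dot]; rw [this, hx, hw]; ring
  rw [abs_le]
  constructor <;> nlinarith [sq_nonneg (x.1 * w.2 - x.2 * w.1)]

lemma neg_one_lt_dot {x w : ℝ × ℝ} (hx : x.1 ^ 2 + x.2 ^ 2 = 1)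
    (hw : w.1 ^ 2 + w.2 ^ 2 = 1) (hcross : x.1 * w.2 - x.2 * w.1 ≠ 0) :
    -1 < dot x w := by
  have h : (dot x w) ^ 2 + (x.1 * w.2 - x.2 * w.1) ^ 2 = 1 := by
    have : (x.1 * w.1 + x.2 * w.2) ^ 2 + (x.1 * w.2 - x.2 * w.1) ^ 2
        = (x.1 ^ 2 + x.2 ^ 2) * (w.1 ^ 2 + w.2 ^ 2) := by ring
    simp only [dot]; rw [this, hx, hw]; ring
  have h2 : 0 < (x.1 * w.2 - x.2 * w.1) ^ 2 := by positivity
  nlinarith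

lemma abs_dot_le_two_norm {w : ℝ × ℝ} (hw : w.1 ^ 2 + w.2 ^ 2 = 1) (x : ℝ × ℝ) :
    |dot x w| ≤ 2 * ‖x‖ := by
  have h1 : |x.1| ≤ ‖x‖ := by
    have := norm_fst_le x; simpa [Real.norm_eq_abs] using this
  have h2 : |x.2| ≤ ‖x‖ := by
    have := norm_snd_le x; simpa [Real.norm_eq_abs] using this
  have hw1 : |w.1| ≤ 1 := by nlinarith [sq_nonneg w.2, abs_nonneg w.1, sq_abs w.1]
  have hw2 : |w.2| ≤ 1 := by nlinarith [sq_nonneg w.1, abs_nonneg w.2, sq_abs w.2]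
  calc |dot x w| ≤ |x.1 * w.1| + |x.2 * w.2| := abs_add_le _ _
    _ = |x.1| * |w.1| + |x.2| * |w.2| := by rw [abs_mul, abs_mul]
    _ ≤ ‖x‖ * 1 + ‖x‖ * 1 := by
        have e1 : |x.1| * |w.1| ≤ ‖x‖ * 1 :=
          mul_le_mul h1 hw1 (abs_nonneg _) (norm_nonneg _)
        have e2 : |x.2| * |w.2| ≤ ‖x‖ * 1 :=
          mul_le_mul h2 hw2 (abs_nonneg _) (norm_nonneg _)
        linarith
    _ = 2 * ‖x‖ := by ring

/-- simple bound : |b| ≤ c and |q| ≤ 1 give b*q ≤ c. -/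
lemma prod_le {b q c : ℝ} (h1 : -c ≤ b) (h2 : b ≤ c) (h3 : -1 ≤ q) (h4 : q ≤ 1) :
    b * q ≤ c := by nlinarith

lemma neg_prod_le {b q c : ℝ} (h1 : -c ≤ b) (h2 : b ≤ c) (h3 : -1 ≤ q) (h4 : q ≤ 1) :
    -c ≤ b * q := by nlinarith

lemma normal_dot {Q : Set (ℝ × ℝ)} {p v : ℝ × ℝ} (hN : IsNormalAt Q p v) :
    ∀ x ∈ Q, dot (x - p) v ≤ 0 := by
  intro x hx; have := hN.2 x hx; simpa [dot] using this

/-- the scaled copy of `Q`, with the image of `P` placed at `A`. -/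
def Hset (Q : Set (ℝ × ℝ)) (μ : ℝ) (P A : ℝ × ℝ) : Set (ℝ × ℝ) :=
  (fun x => μ • x + (A - μ • P)) '' Q

lemma Hset_isHomothet {Q : Set (ℝ × ℝ)} {μ : ℝ} (hμ : 0 < μ) (P A : ℝ × ℝ) :
    IsHomothet Q (Hset Q μ P A) := ⟨A - μ • P, μ, hμ, rfl⟩

lemma mem_Hset {Q : Set (ℝ × ℝ)} {μ : ℝ} (hμ : 0 < μ) {P A d : ℝ × ℝ}
    (h : P + μ⁻¹ • d ∈ Q) : A + d ∈ Hset Q μ P A := by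
  refine ⟨P + μ⁻¹ • d, h, ?_⟩
  have hμ' : μ ≠ 0 := ne_of_gt hμ
  simp only [smul_add, smul_smul, mul_inv_cancel₀ hμ', one_smul]
  abel

lemma mem_Hset' {Q : Set (ℝ × ℝ)} {μ : ℝ} (hμ : 0 < μ) {P A y : ℝ × ℝ}
    (h : P + μ⁻¹ • (y - A) ∈ Q) : y ∈ Hset Q μ P A := by
  have h2 := mem_Hset (A := A) hμ h
  have e : A + (y - A) = y := by abel
  rwa [e] at h2

lemma Hset_out_normal {Q : Set (ℝ × ℝ)} {μ : ℝ} (hμ : 0 < μ) {P v : ℝ × ℝ}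
    (hN : IsNormalAt Q P v) {A y : ℝ × ℝ} (h : 0 < dot (y - A) v) :
    y ∉ Hset Q μ P A := by
  rintro ⟨x, hx, rfl⟩
  have h1 : μ • x + (A - μ • P) - A = μ • (x - P) := by
    rw [smul_sub]; abel
  rw [h1, dot_smul_left] at h
  have := normal_dot hN x hx
  nlinarith

lemma Hset_out_far {Q : Set (ℝ × ℝ)} {μ : ℝ} (hμ : 0 < μ) {C : ℝ}
    (hC : ∀ x ∈ Q, ‖x‖ ≤ C) {P A y : ℝ × ℝ} (h : μ * (C + ‖P‖) < ‖y - A‖) :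
    y ∉ Hset Q μ P A := by
  rintro ⟨x, hx, rfl⟩
  have h1 : μ • x + (A - μ • P) - A = μ • (x - P) := by rw [smul_sub]; abel
  rw [h1] at h
  have h2 : ‖μ • (x - P)‖ = μ * ‖x - P‖ := by
    rw [norm_smul, Real.norm_eq_abs, abs_of_pos hμ]
  have h3 : ‖x - P‖ ≤ C + ‖P‖ := (norm_sub_le _ _).trans (by gcongr; exact hC x hx)
  rw [h2] at h
  nlinarith [norm_nonneg (x - P)]

/-- Key filling lemma: if the normal at `P` is unique, any direction with negative
dot against the normal is eventually inside all large rescalings. -/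
lemma fill {Q : Set (ℝ × ℝ)} (hconv : Convex ℝ Q) {z : ℝ × ℝ} (hz : z ∈ interior Q)
    {P v : ℝ × ℝ} (hP : P ∈ Q) (hN : IsNormalAt Q P v)
    (hu : ∀ w, IsNormalAt Q P w → w = v) (d : ℝ × ℝ) (hd : dot d v < 0) :
    ∃ Λ : ℝ, 1 ≤ Λ ∧ ∀ μ : ℝ, Λ ≤ μ → P + μ⁻¹ • d ∈ Q := by
  set U : Set (ℝ × ℝ) := {y | ∃ μ : ℝ, 0 < μ ∧ ∃ q ∈ Q, μ • (q - P) = y} with hUdef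
  have hQU : ∀ q ∈ Q, q - P ∈ U := fun q hq => ⟨1, one_pos, q, hq, by simp⟩
  have hscale : ∀ y ∈ U, ∀ t : ℝ, 0 < t → t • y ∈ U := by
    rintro y ⟨μ, hμ, q, hq, rfl⟩ t ht
    exact ⟨t * μ, by positivity, q, hq, by rw [smul_smul]⟩
  have hgrow : ∀ (μ μ' : ℝ), 0 < μ → μ ≤ μ' → ∀ q ∈ Q,
      ∃ q' ∈ Q, μ' • (q' - P) = μ • (q - P) := by
    intro μ μ' hμ hle q hq
    have hμ' : 0 < μ' := lt_of_lt_of_le hμ hle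
    refine ⟨(μ / μ') • q + (1 - μ / μ') • P, hconv hq hP (by positivity)
      (by rw [sub_nonneg]; exact div_le_one_of_le₀ hle hμ'.le) (by ring), ?_⟩
    have hne : μ' ≠ 0 := ne_of_gt hμ'
    rw [smul_sub, smul_add, smul_smul, smul_smul]
    field_simp
    module
  have hUconv : Convex ℝ U := by
    rintro x ⟨μx, hμx, qx, hqx, rfl⟩ y ⟨μy, hμy, qy, hqy, rfl⟩ a b ha hb hab
    set μ : ℝ := μx + μy with hμdef
    have hμ : 0 < μ := by positivity
    obtain ⟨qx', hqx', hex⟩ := hgrow μx μ hμx (by simp [hμdef]; positivity) qx hqx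
    obtain ⟨qy', hqy', hey⟩ := hgrow μy μ hμy (by simp [hμdef]; positivity) qy hqy
    refine ⟨μ, hμ, a • qx' + b • qy', hconv hqx' hqy' ha hb hab, ?_⟩
    rw [← hex, ← hey]
    have : a • qx' + b • qy' - P = a • (qx' - P) + b • (qy' - P) := by
      have hP1 : P = (a + b) • P := by rw [hab, one_smul]
      nth_rewrite 1 [hP1]
      rw [smul_sub, smul_sub, add_smul]
      abel
    rw [this, smul_add, smul_smul, smul_smul, mul_comm μ a, mul_comm μ b,
      ← smul_smul, ← smul_smul]
  have hmem_of_U : ∀ y ∈ U, ∃ Λ : ℝ, 1 ≤ Λ ∧ ∀ μ : ℝ, Λ ≤ μ → P + μ⁻¹ • y ∈ Q := by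
    rintro y ⟨μ0, hμ0, q, hq, rfl⟩
    refine ⟨max μ0 1, le_max_right _ _, fun μ hμ => ?_⟩
    have hμpos : 0 < μ := lt_of_lt_of_le one_pos ((le_max_right μ0 1).trans hμ)
    have hle : μ0 ≤ μ := (le_max_left μ0 1).trans hμ
    have h1 : P + μ⁻¹ • μ0 • (q - P) = (μ0 / μ) • q + (1 - μ0 / μ) • P := by
      rw [smul_smul, smul_sub]
      have : μ⁻¹ * μ0 = μ0 / μ := by field_simp
      rw [this]
      module
    rw [h1]
    exact hconv hq hP (by positivity)
      (by rw [sub_nonneg]; exact div_le_one_of_le₀ hle hμpos.le) (by ring)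
  have hu0 : z - P ∈ interior U := by
    have hopen : IsOpen ((fun w => w + (-P)) '' interior Q) :=
      (isOpenMap_add_right (-P)) _ isOpen_interior
    have hsub : ((fun w => w + (-P)) '' interior Q) ⊆ U := by
      rintro _ ⟨w, hw, rfl⟩
      simpa [sub_eq_add_neg] using hQU w (interior_subset hw)
    have hmem : z - P ∈ (fun w => w + (-P)) '' interior Q :=
      ⟨z, hz, by abel⟩
    exact interior_maximal hsub hopen hmem
  have hzQ : z ∈ Q := interior_subset hz
  set c : ℝ := dot (z - P) v with hcdef
  have hc : c ≤ 0 := normal_dot hN z hzQ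
  set ε : ℝ := (-dot d v) / (2 * (1 + |c|)) with hεdef
  have hε : 0 < ε := by
    apply div_pos (by linarith) (by positivity)
  set d'' : ℝ × ℝ := (1 + ε) • d - ε • (z - P) with hd''def
  have hdotd'' : dot d'' v < 0 := by
    have h1 : dot d'' v = (1 + ε) * dot d v - ε * c := by
      rw [hd''def]
      simp [dot, Prod.smul_fst, Prod.smul_snd, hcdef]
      ring
    have h2 : ε * (1 + |c|) = (-dot d v) / 2 := by
      rw [hεdef]; field_simp
    have h3 : ε * (-c) ≤ ε * (1 + |c|) := by
      have : -c ≤ 1 + |c| := by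
        rcases abs_cases c with ⟨h, _⟩ | ⟨h, _⟩ <;> linarith
      exact mul_le_mul_of_nonneg_left this hε.le
    nlinarith
  by_cases hcl : d'' ∈ closure U
  · have hne1ε : (1 : ℝ) + ε ≠ 0 := by positivity
    have hcombo : (ε / (1 + ε)) • (z - P) + (1 / (1 + ε)) • d'' = d := by
      rw [hd''def]
      match_scalars <;> field_simp <;> ring
    have hdint : d ∈ interior U := by
      rw [← hcombo]
      refine hUconv.combo_interior_closure_mem_interior hu0 hcl (by positivity)
        (by positivity) ?_
      rw [← add_div, add_comm]
      exact div_self hne1ε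
    exact hmem_of_U d (interior_subset hdint)
  · exfalso
    obtain ⟨f, u, hfa, hfx⟩ :=
      geometric_hahn_banach_closed_point hUconv.closure isClosed_closure hcl
    have h0U : (0 : ℝ × ℝ) ∈ U := ⟨1, one_pos, P, hP, by simp⟩
    have hupos : 0 < u := by
      have := hfa 0 (subset_closure h0U); simpa using this
    have hf_nonpos : ∀ y ∈ U, f y ≤ 0 := by
      intro y hy
      by_contra hpos
      push_neg at hpos
      have h2 := hfa (((u + 1) / f y) • y)
        (subset_closure (hscale y hy _ (by positivity)))
      rw [map_smul, smul_eq_mul, div_mul_cancel₀ _ (ne_of_gt hpos)] at h2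
      linarith
    set w : ℝ × ℝ := (f (1, 0), f (0, 1)) with hwdef
    have hfw : ∀ x : ℝ × ℝ, f x = dot x w := by
      intro x
      have hx : x = x.1 • ((1 : ℝ), (0 : ℝ)) + x.2 • ((0 : ℝ), (1 : ℝ)) := by
        ext <;> simp
      rw [hx, map_add, map_smul, map_smul]
      simp [dot, hwdef]
    have hwpos : 0 < dot d'' w := by
      rw [← hfw]; linarith
    have hwsq : 0 < w.1 ^ 2 + w.2 ^ 2 := by
      by_contra hq
      push_neg at hq
      have h1 : w.1 = 0 := by nlinarith [sq_nonneg w.1, sq_nonneg w.2]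
      have h2 : w.2 = 0 := by nlinarith [sq_nonneg w.1, sq_nonneg w.2]
      have : dot d'' w = 0 := by
        have h1' : f (1, 0) = 0 := h1
        have h2' : f (0, 1) = 0 := h2
        simp only [dot]
        rw [h1, h2]
        ring
      linarith
    set N : ℝ := Real.sqrt (w.1 ^ 2 + w.2 ^ 2) with hNdef
    have hNpos : 0 < N := Real.sqrt_pos.mpr hwsq
    have hNsq : N ^ 2 = w.1 ^ 2 + w.2 ^ 2 := Real.sq_sqrt hwsq.le
    have hnormal : IsNormalAt Q P (w.1 / N, w.2 / N) := by
      constructor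
      · field_simp
        linarith [hNsq]
      · intro x hx
        have h1 : f (x - P) ≤ 0 := hf_nonpos _ (hQU x hx)
        rw [hfw] at h1
        have h2 : (x.1 - P.1) * (w.1 / N) + (x.2 - P.2) * (w.2 / N)
            = dot (x - P) w / N := by
          simp [dot]; ring
        rw [h2]
        exact div_nonpos_of_nonpos_of_nonneg h1 hNpos.le
    have hveq := hu _ hnormal
    have heq2 : dot d'' v = dot d'' w / N := by
      rw [← hveq]; simp [dot]; ring
    rw [heq2] at hdotd''
    have : 0 < dot d'' w / N := div_pos hwpos hNpos
    linarith

/-- distinct scales with same anchor give distinct sets. -/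
lemma Hset_inj {Q : Set (ℝ × ℝ)} (hQc : IsCompact Q) {z : ℝ × ℝ}
    (hz : z ∈ interior Q) {P A : ℝ × ℝ} {μ μ' : ℝ} (h0 : 0 < μ) (hlt : μ < μ') :
    Hset Q μ P A ≠ Hset Q μ' P A := by
  intro heq
  obtain ⟨δ, hδ, hball⟩ := Metric.isOpen_iff.mp isOpen_interior z hz
  have hq0 : ∃ q0 ∈ Q, q0 ≠ P := by
    by_cases hzP : z = P
    · refine ⟨z + (δ/2, 0), interior_subset (hball ?_), ?_⟩
      · rw [Metric.mem_ball, dist_eq_norm]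
        have he : z + (δ/2, 0) - z = ((δ/2 : ℝ), (0 : ℝ)) := by abel
        rw [he, Prod.norm_def]
        have e1 : ‖(δ/2 : ℝ)‖ = δ/2 := by
          rw [Real.norm_eq_abs, abs_of_pos (half_pos hδ)]
        have e2 : ‖(0 : ℝ)‖ = 0 := norm_zero
        rw [e1, e2, max_eq_left (by positivity)]
        linarith
      · intro hc
        rw [← hzP] at hc
        have : (δ/2, (0:ℝ)) = ((0:ℝ), (0:ℝ)) := by
          have := sub_eq_zero.mpr hc
          have h2 : z + (δ/2, 0) - z = ((δ/2 : ℝ), (0 : ℝ)) := by abel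
          rw [h2] at this; exact this
        have := congrArg Prod.fst this
        simp at this
        linarith
    · exact ⟨z, interior_subset hz, hzP⟩
  obtain ⟨q0, hq0Q, hq0P⟩ := hq0
  set c : ℝ := μ' / μ with hcdef
  have hc1 : 1 < c := (one_lt_div h0).mpr hlt
  have hexp : ∀ x ∈ Q, P + c • (x - P) ∈ Q := by
    intro x hx
    have hmem : μ' • x + (A - μ' • P) ∈ Hset Q μ' P A := ⟨x, hx, rfl⟩
    rw [← heq] at hmem
    obtain ⟨y, hy, hyeq⟩ := hmem
    have : y = P + c • (x - P) := by
      have hμne : μ ≠ 0 := ne_of_gt h0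
      have h2 : μ • y = μ • (P + c • (x - P)) := by
        have h3 : μ • (P + c • (x - P)) = μ' • x + (A - μ' • P) - (A - μ • P) := by
          rw [hcdef, smul_add, smul_smul]
          rw [mul_div_cancel₀ _ hμne]
          rw [smul_sub]
          abel
        have hyeq' : μ • y + (A - μ • P) = μ' • x + (A - μ' • P) := hyeq
        rw [h3, ← hyeq']
        abel
      exact smul_right_injective (ℝ × ℝ) hμne h2
    rw [← this]; exact hy
  have hiter : ∀ n : ℕ, P + (c ^ n) • (q0 - P) ∈ Q := by
    intro n
    induction n with
    | zero => simpa using hq0Q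
    | succ n ih =>
      have := hexp _ ih
      have he : P + c • (P + c ^ n • (q0 - P) - P) = P + c ^ (n+1) • (q0 - P) := by
        rw [pow_succ]
        have : P + c ^ n • (q0 - P) - P = c ^ n • (q0 - P) := by abel
        rw [this, smul_smul]
        ring_nf
      rwa [he] at this
  obtain ⟨C, hC⟩ := hQc.isBounded.exists_norm_le
  have hnq : 0 < ‖q0 - P‖ := by
    rw [norm_pos_iff]; exact sub_ne_zero.mpr hq0P
  obtain ⟨n, hn⟩ := pow_unbounded_of_one_lt ((C + ‖P‖) / ‖q0 - P‖) hc1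
  have hmem := hiter n
  have h1 : ‖P + c ^ n • (q0 - P)‖ ≤ C := hC _ hmem
  have h2 : ‖c ^ n • (q0 - P)‖ = c ^ n * ‖q0 - P‖ := by
    rw [norm_smul, Real.norm_eq_abs, abs_of_pos (by positivity)]
  have h3 : ‖c ^ n • (q0 - P)‖ ≤ ‖P + c ^ n • (q0 - P)‖ + ‖P‖ := by
    have := norm_sub_le (P + c ^ n • (q0 - P)) P
    have he : P + c ^ n • (q0 - P) - P = c ^ n • (q0 - P) := by abel
    rw [he] at this
    linarith
  have h4 : (C + ‖P‖) / ‖q0 - P‖ * ‖q0 - P‖ < c ^ n * ‖q0 - P‖ :=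
    mul_lt_mul_of_pos_right hn hnq
  rw [div_mul_cancel₀ _ (ne_of_gt hnq)] at h4
  linarith

/-- The relabeling lemma. -/
lemma pick_labels {v1 v2 v3 : ℝ × ℝ}
    (h1 : v1.1 ^ 2 + v1.2 ^ 2 = 1) (h2 : v2.1 ^ 2 + v2.2 ^ 2 = 1)
    (h3 : v3.1 ^ 2 + v3.2 ^ 2 = 1)
    (c12 : v1.1 * v2.2 - v1.2 * v2.1 ≠ 0)
    (c13 : v1.1 * v3.2 - v1.2 * v3.1 ≠ 0)
    (c23 : v2.1 * v3.2 - v2.2 * v3.1 ≠ 0) :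
    ∃ W1 W2 W3 d0 : ℝ × ℝ,
      ((W1 = v1 ∧ W2 = v2 ∧ W3 = v3) ∨ (W1 = v2 ∧ W2 = v1 ∧ W3 = v3) ∨
       (W1 = v1 ∧ W2 = v3 ∧ W3 = v2) ∨ (W1 = v3 ∧ W2 = v1 ∧ W3 = v2) ∨
       (W1 = v2 ∧ W2 = v3 ∧ W3 = v1) ∨ (W1 = v3 ∧ W2 = v2 ∧ W3 = v1)) ∧
      d0.1 ^ 2 + d0.2 ^ 2 = 1 ∧ dot d0 W2 = 0 ∧
      dot d0 W1 < 0 ∧ 0 < dot d0 W3 := by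
  have key : (v1.1 * v2.2 - v1.2 * v2.1) * (v1.1 * v3.2 - v1.2 * v3.1) < 0 ∨
      (v2.1 * v1.2 - v2.2 * v1.1) * (v2.1 * v3.2 - v2.2 * v3.1) < 0 ∨
      (v3.1 * v1.2 - v3.2 * v1.1) * (v3.1 * v2.2 - v3.2 * v2.1) < 0 := by
    by_contra hcon
    push_neg at hcon
    obtain ⟨hA, hB, hC⟩ := hcon
    have hid : ((v1.1 * v2.2 - v1.2 * v2.1) * (v1.1 * v3.2 - v1.2 * v3.1)) *
        ((v2.1 * v1.2 - v2.2 * v1.1) * (v2.1 * v3.2 - v2.2 * v3.1)) *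
        ((v3.1 * v1.2 - v3.2 * v1.1) * (v3.1 * v2.2 - v3.2 * v2.1)) =
        -(((v1.1 * v2.2 - v1.2 * v2.1) * (v1.1 * v3.2 - v1.2 * v3.1) *
          (v2.1 * v3.2 - v2.2 * v3.1)) ^ 2) := by ring
    have hpos : 0 < ((v1.1 * v2.2 - v1.2 * v2.1) * (v1.1 * v3.2 - v1.2 * v3.1) *
        (v2.1 * v3.2 - v2.2 * v3.1)) ^ 2 := by positivity
    nlinarith [mul_nonneg (mul_nonneg hA hB) hC]
  have build : ∀ m x y : ℝ × ℝ, m.1 ^ 2 + m.2 ^ 2 = 1 →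
      m.1 * x.2 - m.2 * x.1 < 0 → 0 < m.1 * y.2 - m.2 * y.1 →
      ∃ d0 : ℝ × ℝ, d0.1 ^ 2 + d0.2 ^ 2 = 1 ∧ dot d0 m = 0 ∧
        dot d0 x < 0 ∧ 0 < dot d0 y := by
    intro m x y hm hx hy
    refine ⟨(-m.2, m.1), ?_, ?_, ?_, ?_⟩
    · show (-m.2) ^ 2 + m.1 ^ 2 = 1
      linear_combination hm
    · show (-m.2) * m.1 + m.1 * m.2 = 0
      ring
    · show (-m.2) * x.1 + m.1 * x.2 < 0
      linarith
    · show 0 < (-m.2) * y.1 + m.1 * y.2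
      linarith
  obtain hk | hk | hk := key
  · rcases mul_neg_iff.mp hk with ⟨ha, hb⟩ | ⟨ha, hb⟩
    · obtain ⟨d0, hd⟩ := build v1 v3 v2 h1 hb ha
      exact ⟨v3, v1, v2, d0, Or.inr (Or.inr (Or.inr (Or.inl ⟨rfl, rfl, rfl⟩))),
        hd.1, hd.2.1, hd.2.2.1, hd.2.2.2⟩
    · obtain ⟨d0, hd⟩ := build v1 v2 v3 h1 ha hb
      exact ⟨v2, v1, v3, d0, Or.inr (Or.inl ⟨rfl, rfl, rfl⟩),
        hd.1, hd.2.1, hd.2.2.1, hd.2.2.2⟩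
  · rcases mul_neg_iff.mp hk with ⟨ha, hb⟩ | ⟨ha, hb⟩
    · obtain ⟨d0, hd⟩ := build v2 v3 v1 h2 hb ha
      exact ⟨v3, v2, v1, d0, Or.inr (Or.inr (Or.inr (Or.inr (Or.inr ⟨rfl, rfl, rfl⟩)))),
        hd.1, hd.2.1, hd.2.2.1, hd.2.2.2⟩
    · obtain ⟨d0, hd⟩ := build v2 v1 v3 h2 ha hb
      exact ⟨v1, v2, v3, d0, Or.inl ⟨rfl, rfl, rfl⟩,
        hd.1, hd.2.1, hd.2.2.1, hd.2.2.2⟩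
  · rcases mul_neg_iff.mp hk with ⟨ha, hb⟩ | ⟨ha, hb⟩
    · obtain ⟨d0, hd⟩ := build v3 v2 v1 h3 hb ha
      exact ⟨v2, v3, v1, d0, Or.inr (Or.inr (Or.inr (Or.inr (Or.inl ⟨rfl, rfl, rfl⟩)))),
        hd.1, hd.2.1, hd.2.2.1, hd.2.2.2⟩
    · obtain ⟨d0, hd⟩ := build v3 v1 v2 h3 ha hb
      exact ⟨v1, v3, v2, d0, Or.inr (Or.inr (Or.inl ⟨rfl, rfl, rfl⟩)),
        hd.1, hd.2.1, hd.2.2.1, hd.2.2.2⟩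

end

end DualLB


namespace DualLB

noncomputable section

set_option maxHeartbeats 4000000 in
lemma construction (Q : Set (ℝ × ℝ)) (hQc : IsCompact Q) (hconv : Convex ℝ Q)
    {z : ℝ × ℝ} (hz : z ∈ interior Q)
    {P1 W1 P2 W2 P3 W3 d0 : ℝ × ℝ}
    (hP1 : P1 ∈ Q) (hN1 : IsNormalAt Q P1 W1) (hu1 : ∀ w, IsNormalAt Q P1 w → w = W1)
    (hP2 : P2 ∈ Q) (hN2 : IsNormalAt Q P2 W2) (hu2 : ∀ w, IsNormalAt Q P2 w → w = W2)
    (hP3 : P3 ∈ Q) (hN3 : IsNormalAt Q P3 W3) (hu3 : ∀ w, IsNormalAt Q P3 w → w = W3)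
    (hd0u : d0.1 ^ 2 + d0.2 ^ 2 = 1)
    (hd02 : dot d0 W2 = 0) (hr1 : dot d0 W1 < 0) (hr3 : 0 < dot d0 W3)
    (hs13 : -1 < dot W3 W1)
    (k : ℕ) (hk : 2 ≤ k) :
    ∃ S : Finset (Set (ℝ × ℝ)), (∀ R ∈ S, IsHomothet Q R) ∧
      ∀ m : ℕ, m < 4 * (k / 2) → ∀ f : Set (ℝ × ℝ) → Fin m,
        ∃ p : ℝ × ℝ,
          ((S.filter (fun R => p ∈ R)).image f).card <
            min (S.filter (fun R => p ∈ R)).card k := by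
  -- basic unit facts
  have hW1u := hN1.1
  have hW2u := hN2.1
  have hW3u := hN3.1
  have hdd : dot d0 d0 = 1 := dot_self_unit hd0u
  have h22 : dot W2 W2 = 1 := dot_self_unit hW2u
  have h11 : dot W1 W1 = 1 := dot_self_unit hW1u
  have h33 : dot W3 W3 = 1 := dot_self_unit hW3u
  have hq1a := (abs_le.mp (abs_dot_le_one hW2u hW1u)).1
  have hq1b := (abs_le.mp (abs_dot_le_one hW2u hW1u)).2
  have hq3a := (abs_le.mp (abs_dot_le_one hW2u hW3u)).1
  have hq3b := (abs_le.mp (abs_dot_le_one hW2u hW3u)).2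
  have hsle : dot W3 W1 ≤ 1 := (abs_le.mp (abs_dot_le_one hW3u hW1u)).2
  -- r
  obtain ⟨r, hrdef⟩ : ∃ r : ℝ, r = min (-dot d0 W1) (dot d0 W3) := ⟨_, rfl⟩
  have hr_pos : 0 < r := by rw [hrdef]; exact lt_min (by linarith) hr3
  have hr_r1 : r ≤ -dot d0 W1 := by rw [hrdef]; exact min_le_left _ _
  have hr_r3 : r ≤ dot d0 W3 := by rw [hrdef]; exact min_le_right _ _
  have hr_le1 : r ≤ 1 := by
    have := (abs_le.mp (abs_dot_le_one hd0u hW1u)).1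
    linarith
  -- ds
  obtain ⟨ds, hdsdef⟩ : ∃ ds : ℝ × ℝ, ds = W1 + W3 := ⟨_, rfl⟩
  have hdsW1 : dot ds W1 = 1 + dot W3 W1 := by
    rw [hdsdef, dot_add_left, h11]
  have hdsW3 : dot ds W3 = 1 + dot W3 W1 := by
    rw [hdsdef, dot_add_left, h33, dot_comm W1 W3]; ring
  have hdsW2a : -2 ≤ dot ds W2 := by
    have a1 := (abs_le.mp (abs_dot_le_one hW1u hW2u)).1
    have a3 := (abs_le.mp (abs_dot_le_one hW3u hW2u)).1
    rw [hdsdef, dot_add_left]; linarith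
  have hdsW2b : dot ds W2 ≤ 2 := by
    have a1 := (abs_le.mp (abs_dot_le_one hW1u hW2u)).2
    have a3 := (abs_le.mp (abs_dot_le_one hW3u hW2u)).2
    rw [hdsdef, dot_add_left]; linarith
  have h1s : 0 < 1 + dot W3 W1 := by linarith
  -- norm bound on Q
  obtain ⟨C0, hC0⟩ := hQc.isBounded.exists_norm_le
  have hC0nn : 0 ≤ C0 := (norm_nonneg P1).trans (hC0 _ hP1)
  -- k'
  obtain ⟨k', hk'def⟩ : ∃ k' : ℕ, k' = k / 2 := ⟨_, rfl⟩
  have hk'1 : 1 ≤ k' := by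
    rw [hk'def]; exact (Nat.one_le_div_iff (by norm_num)).mpr hk
  have h2k' : 2 * k' ≤ k := by
    rw [hk'def, mul_comm]; exact Nat.div_mul_le_self k 2
  have hjc : ∀ j : ℕ, (0:ℝ) ≤ (j:ℝ) := fun j => Nat.cast_nonneg j
  -- gamma fill vectors (relative to anchor g, before scaling by θ)
  obtain ⟨Da0, hDa0⟩ : ∃ v : ℝ × ℝ, v = d0 + (-(r/8)) • W2 := ⟨_, rfl⟩
  obtain ⟨Db0, hDb0⟩ : ∃ v : ℝ × ℝ, v = ((-1 : ℝ)) • d0 + (-(r/8)) • W2 := ⟨_, rfl⟩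
  obtain ⟨Dc0, hDc0⟩ : ∃ v : ℝ × ℝ, v = (-(3*r/8)) • W2 + (r/32) • ds := ⟨_, rfl⟩
  have hDa0W2 : dot Da0 W2 < 0 := by
    rw [hDa0, dot_add_left, dot_smul_left, hd02, h22]; ring_nf; linarith
  have hDb0W2 : dot Db0 W2 < 0 := by
    rw [hDb0, dot_comb, hd02, h22]; ring_nf; linarith
  have hDc0W2 : dot Dc0 W2 < 0 := by
    rw [hDc0, dot_comb, h22]
    have e1 : (r/32) * dot ds W2 ≤ (r/32) * 2 :=
      mul_le_mul_of_nonneg_left hdsW2b (by linarith)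
    linarith
  obtain ⟨La, hLa1, hLa⟩ := fill hconv hz hP2 hN2 hu2 Da0 hDa0W2
  obtain ⟨Lb, hLb1, hLb⟩ := fill hconv hz hP2 hN2 hu2 Db0 hDb0W2
  obtain ⟨Lc, hLc1, hLc⟩ := fill hconv hz hP2 hN2 hu2 Dc0 hDc0W2
  obtain ⟨Lg, hLgdef⟩ : ∃ L : ℝ, L = max (max La Lb) Lc := ⟨_, rfl⟩
  have hLg1 : 1 ≤ Lg := by
    rw [hLgdef]; exact hLa1.trans ((le_max_left _ _).trans (le_max_left _ _))
  have hLgA : La ≤ Lg := by rw [hLgdef]; exact (le_max_left _ _).trans (le_max_left _ _)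
  have hLgB : Lb ≤ Lg := by rw [hLgdef]; exact (le_max_right _ _).trans (le_max_left _ _)
  have hLgC : Lc ≤ Lg := by rw [hLgdef]; exact le_max_right _ _
  -- θ
  obtain ⟨X, hXdef⟩ : ∃ X : ℝ, X = (Lg + (k' : ℝ)) * (C0 + ‖P2‖ + 1) := ⟨_, rfl⟩
  have hXpos : 0 < X := by
    rw [hXdef]
    have h2 : 0 < Lg + (k' : ℝ) := by linarith [hjc k']
    have h3 : 0 < C0 + ‖P2‖ + 1 := by positivity
    exact mul_pos h2 h3
  obtain ⟨θ, hθdef⟩ : ∃ θ : ℝ, θ = min 1 (1 / (8 * X)) := ⟨_, rfl⟩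
  have hθpos : 0 < θ := by
    rw [hθdef]
    refine lt_min one_pos ?_
    have h8 : 0 < 8 * X := by linarith
    positivity
  have hθ1 : θ ≤ 1 := by rw [hθdef]; exact min_le_left _ _
  have hθX : θ * X ≤ 1/8 := by
    have h2 : θ ≤ 1 / (8 * X) := by rw [hθdef]; exact min_le_right _ _
    calc θ * X ≤ (1 / (8 * X)) * X := mul_le_mul_of_nonneg_right h2 hXpos.le
      _ = 1/8 := by field_simp
  have hGpos : ∀ j : ℕ, 0 < θ * (Lg + (j:ℝ)) := fun j =>
    mul_pos hθpos (by linarith [hjc j])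

  -- points
  obtain ⟨g, hg⟩ : ∃ v : ℝ × ℝ, v = (θ * (r/4)) • W2 := ⟨_, rfl⟩
  obtain ⟨K, hK⟩ : ∃ v : ℝ × ℝ, v = (-(θ * (r/8))) • W2 := ⟨_, rfl⟩
  obtain ⟨Pa, hPa⟩ : ∃ v : ℝ × ℝ, v = g + θ • Da0 := ⟨_, rfl⟩
  obtain ⟨Pb, hPb⟩ : ∃ v : ℝ × ℝ, v = g + θ • Db0 := ⟨_, rfl⟩
  obtain ⟨Pc, hPc⟩ : ∃ v : ℝ × ℝ, v = g + θ • Dc0 := ⟨_, rfl⟩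
  obtain ⟨m1, hm1⟩ : ∃ v : ℝ × ℝ, v = d0 + (-(r/8)) • W2 := ⟨_, rfl⟩
  obtain ⟨m3, hm3⟩ : ∃ v : ℝ × ℝ, v = ((-1 : ℝ)) • d0 + (-(r/8)) • W2 := ⟨_, rfl⟩
  -- beta-cluster fill facts
  have hm1W2 : dot m1 W2 < 0 := by
    rw [hm1, dot_add_left, dot_smul_left, hd02, h22]; ring_nf; linarith
  have hm3W2 : dot m3 W2 < 0 := by
    rw [hm3, dot_comb, hd02, h22]; ring_nf; linarith
  have hPcW2 : dot Pc W2 = θ * (r/4) + θ * dot Dc0 W2 := by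
    rw [hPc, dot_add_left, dot_smul_left, hg, dot_smul_left, h22]; ring
  have hDc0W2eq : dot Dc0 W2 = -(3*r/8) + (r/32) * dot ds W2 := by
    rw [hDc0, dot_comb, h22]; ring
  have hPcW2lt : dot Pc W2 < 0 := by
    rw [hPcW2, hDc0W2eq]
    have e1 : (r/32) * dot ds W2 ≤ (r/32) * 2 :=
      mul_le_mul_of_nonneg_left hdsW2b (by linarith)
    have e2 : -(3*r/8) + (r/32) * dot ds W2 ≤ -(r/4 + r/16) := by linarith
    have e3 : θ * (-(3*r/8) + (r/32) * dot ds W2) ≤ θ * (-(r/4 + r/16)) :=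
      mul_le_mul_of_nonneg_left e2 hθpos.le
    have e5 : 0 < θ * (r/16) := mul_pos hθpos (by linarith)
    linarith
  obtain ⟨Lq1, hLq11, hLq1⟩ := fill hconv hz hP2 hN2 hu2 m1 hm1W2
  obtain ⟨Lq3, hLq31, hLq3⟩ := fill hconv hz hP2 hN2 hu2 m3 hm3W2
  obtain ⟨Lqc, hLqc1, hLqc⟩ := fill hconv hz hP2 hN2 hu2 Pc hPcW2lt
  obtain ⟨LB, hLBdef⟩ : ∃ L : ℝ, L = max (max Lq1 Lq3) Lqc := ⟨_, rfl⟩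
  have hLB1 : 1 ≤ LB := by
    rw [hLBdef]; exact hLq11.trans ((le_max_left _ _).trans (le_max_left _ _))
  have hLBq1 : Lq1 ≤ LB := by rw [hLBdef]; exact (le_max_left _ _).trans (le_max_left _ _)
  have hLBq3 : Lq3 ≤ LB := by rw [hLBdef]; exact (le_max_right _ _).trans (le_max_left _ _)
  have hLBqc : Lqc ≤ LB := by rw [hLBdef]; exact le_max_right _ _
  -- T and F
  obtain ⟨T, hTdef⟩ : ∃ T : ℝ,
      T = (2*(LB + (k' : ℝ))*(C0 + ‖P2‖ + 1) + 2)/(1 + dot W3 W1) := ⟨_, rfl⟩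
  have hTs : T * (1 + dot W3 W1) = 2*(LB + (k' : ℝ))*(C0 + ‖P2‖ + 1) + 2 := by
    rw [hTdef]; field_simp
  have hkc0 : (0:ℝ) ≤ (k' : ℝ) := Nat.cast_nonneg _
  have hPnn : (0:ℝ) ≤ ‖P2‖ := norm_nonneg _
  have hmn : 0 ≤ (LB + (k':ℝ)) * (C0 + ‖P2‖ + 1) :=
    mul_nonneg (by linarith) (by positivity)
  have hT2 : 2 ≤ T * (1 + dot W3 W1) := by
    rw [hTs]; linarith
  have hTpos : 0 < T := by
    rw [hTdef]
    exact div_pos (by linarith) h1s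
  obtain ⟨F, hF⟩ : ∃ v : ℝ × ℝ, v = (-T) • ds := ⟨_, rfl⟩
  -- H1 cluster fill facts
  have hm1K : m1 - K = (1:ℝ) • d0 + (θ*(r/8) - r/8) • W2 := by rw [hm1, hK]; module
  have hm3K : m3 - K = ((-1:ℝ)) • d0 + (θ*(r/8) - r/8) • W2 := by rw [hm3, hK]; module
  have hPaK : Pa - K = θ • d0 + (θ*(r/4)) • W2 := by
    rw [hPa, hg, hK, hDa0]; module
  have hPbK : Pb - K = (-θ) • d0 + (θ*(r/4)) • W2 := by
    rw [hPb, hg, hK, hDb0]; module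
  have hPcK : Pc - K = (0:ℝ) • d0 + (θ*(r/32)) • ds := by
    rw [hPc, hg, hK, hDc0]; module
  have hFK : F - K = (-T) • ds + (θ*(r/8)) • W2 := by
    rw [hF, hK]; module
  have hb8a : 0 ≤ θ*(r/8) := mul_nonneg hθpos.le (by linarith)
  have hb8b : θ*(r/8) ≤ 1*(r/8) := mul_le_mul_of_nonneg_right hθ1 (by linarith)
  have hbl : -(r/8) ≤ θ*(r/8) - r/8 := by linarith
  have hbu : θ*(r/8) - r/8 ≤ r/8 := by linarith
  -- dot computations against W1
  have em1K1 : dot (m1 - K) W1 = dot d0 W1 + (θ*(r/8) - r/8) * dot W2 W1 := by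
    rw [hm1K, dot_comb]; ring
  have em3K1 : dot (m3 - K) W1 = -dot d0 W1 + (θ*(r/8) - r/8) * dot W2 W1 := by
    rw [hm3K, dot_comb]; ring
  have ePaK1 : dot (Pa - K) W1 = θ * dot d0 W1 + (θ*(r/4)) * dot W2 W1 := by
    rw [hPaK, dot_comb]
  have ePbK1 : dot (Pb - K) W1 = -(θ * dot d0 W1) + (θ*(r/4)) * dot W2 W1 := by
    rw [hPbK, dot_comb]; ring
  have ePcK1 : dot (Pc - K) W1 = (θ*(r/32)) * (1 + dot W3 W1) := by
    rw [hPcK, dot_comb, hdsW1]; ring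
  have eFK1 : dot (F - K) W1 = -(T * (1 + dot W3 W1)) + (θ*(r/8)) * dot W2 W1 := by
    rw [hFK, dot_comb, hdsW1]; ring
  -- dot computations against W3
  have em1K3 : dot (m1 - K) W3 = dot d0 W3 + (θ*(r/8) - r/8) * dot W2 W3 := by
    rw [hm1K, dot_comb]; ring
  have em3K3 : dot (m3 - K) W3 = -dot d0 W3 + (θ*(r/8) - r/8) * dot W2 W3 := by
    rw [hm3K, dot_comb]; ring
  have ePaK3 : dot (Pa - K) W3 = θ * dot d0 W3 + (θ*(r/4)) * dot W2 W3 := by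
    rw [hPaK, dot_comb]
  have ePbK3 : dot (Pb - K) W3 = -(θ * dot d0 W3) + (θ*(r/4)) * dot W2 W3 := by
    rw [hPbK, dot_comb]; ring
  have ePcK3 : dot (Pc - K) W3 = (θ*(r/32)) * (1 + dot W3 W1) := by
    rw [hPcK, dot_comb, hdsW3]; ring
  have eFK3 : dot (F - K) W3 = -(T * (1 + dot W3 W1)) + (θ*(r/8)) * dot W2 W3 := by
    rw [hFK, dot_comb, hdsW3]; ring
  -- inequalities for H1
  have hm1K1lt : dot (m1 - K) W1 < 0 := by
    rw [em1K1]
    have hp := prod_le hbl hbu hq1a hq1b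
    linarith [hr_r1, hr_pos]
  have hPaK1lt : dot (Pa - K) W1 < 0 := by
    rw [ePaK1]
    have hp : (r/4) * dot W2 W1 ≤ r/4 := prod_le (by linarith) le_rfl hq1a hq1b
    have hinner : dot d0 W1 + (r/4) * dot W2 W1 ≤ -(3*r/4) := by linarith
    have h2 : θ * (dot d0 W1 + (r/4) * dot W2 W1) ≤ θ * (-(3*r/4)) :=
      mul_le_mul_of_nonneg_left hinner hθpos.le
    have h3 : 0 < θ * (3*r/4) := mul_pos hθpos (by linarith)
    have h4 : θ * dot d0 W1 + (θ*(r/4)) * dot W2 W1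
        = θ * (dot d0 W1 + (r/4) * dot W2 W1) := by ring
    linarith
  have hFK1lt : dot (F - K) W1 < 0 := by
    rw [eFK1]
    have hp := prod_le (by linarith : -(r/8) ≤ θ*(r/8)) (by linarith : θ*(r/8) ≤ r/8)
      hq1a hq1b
    linarith
  have hm3K1gt : 0 < dot (m3 - K) W1 := by
    rw [em3K1]
    have hp := neg_prod_le hbl hbu hq1a hq1b
    linarith [hr_r1, hr_pos]
  have hPbK1gt : 0 < dot (Pb - K) W1 := by
    rw [ePbK1]
    have hp : -(r/4) ≤ (r/4) * dot W2 W1 := neg_prod_le (by linarith) le_rfl hq1a hq1b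
    have hinner : (3*r/4) ≤ -dot d0 W1 + (r/4) * dot W2 W1 := by linarith
    have h2 : θ * (3*r/4) ≤ θ * (-dot d0 W1 + (r/4) * dot W2 W1) :=
      mul_le_mul_of_nonneg_left hinner hθpos.le
    have h3 : 0 < θ * (3*r/4) := mul_pos hθpos (by linarith)
    have h4 : -(θ * dot d0 W1) + (θ*(r/4)) * dot W2 W1
        = θ * (-dot d0 W1 + (r/4) * dot W2 W1) := by ring
    linarith
  have hPcK1gt : 0 < dot (Pc - K) W1 := by
    rw [ePcK1]
    exact mul_pos (mul_pos hθpos (by linarith)) h1s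
  -- inequalities for H3
  have hm3K3lt : dot (m3 - K) W3 < 0 := by
    rw [em3K3]
    have hp := prod_le hbl hbu hq3a hq3b
    linarith [hr_r3, hr_pos]
  have hPbK3lt : dot (Pb - K) W3 < 0 := by
    rw [ePbK3]
    have hp : (r/4) * dot W2 W3 ≤ r/4 := prod_le (by linarith) le_rfl hq3a hq3b
    have hinner : -dot d0 W3 + (r/4) * dot W2 W3 ≤ -(3*r/4) := by linarith
    have h2 : θ * (-dot d0 W3 + (r/4) * dot W2 W3) ≤ θ * (-(3*r/4)) :=
      mul_le_mul_of_nonneg_left hinner hθpos.le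
    have h3 : 0 < θ * (3*r/4) := mul_pos hθpos (by linarith)
    have h4 : -(θ * dot d0 W3) + (θ*(r/4)) * dot W2 W3
        = θ * (-dot d0 W3 + (r/4) * dot W2 W3) := by ring
    linarith
  have hFK3lt : dot (F - K) W3 < 0 := by
    rw [eFK3]
    have hp := prod_le (by linarith : -(r/8) ≤ θ*(r/8)) (by linarith : θ*(r/8) ≤ r/8)
      hq3a hq3b
    linarith
  have hm1K3gt : 0 < dot (m1 - K) W3 := by
    rw [em1K3]
    have hp := neg_prod_le hbl hbu hq3a hq3b
    linarith [hr_r3, hr_pos]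
  have hPaK3gt : 0 < dot (Pa - K) W3 := by
    rw [ePaK3]
    have hp : -(r/4) ≤ (r/4) * dot W2 W3 := neg_prod_le (by linarith) le_rfl hq3a hq3b
    have hinner : (3*r/4) ≤ dot d0 W3 + (r/4) * dot W2 W3 := by linarith
    have h2 : θ * (3*r/4) ≤ θ * (dot d0 W3 + (r/4) * dot W2 W3) :=
      mul_le_mul_of_nonneg_left hinner hθpos.le
    have h3 : 0 < θ * (3*r/4) := mul_pos hθpos (by linarith)
    have h4 : θ * dot d0 W3 + (θ*(r/4)) * dot W2 W3
        = θ * (dot d0 W3 + (r/4) * dot W2 W3) := by ring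
    linarith
  have hPcK3gt : 0 < dot (Pc - K) W3 := by
    rw [ePcK3]
    exact mul_pos (mul_pos hθpos (by linarith)) h1s
  -- beta out facts
  have hPaW2gt : 0 < dot (Pa - 0) W2 := by
    have e : Pa - 0 = θ • d0 + (θ*(r/8)) • W2 := by rw [hPa, hg, hDa0]; module
    rw [e, dot_comb, hd02, h22]
    have := mul_pos hθpos hr_pos
    linarith
  have hPbW2gt : 0 < dot (Pb - 0) W2 := by
    have e : Pb - 0 = (-θ) • d0 + (θ*(r/8)) • W2 := by rw [hPb, hg, hDb0]; module
    rw [e, dot_comb, hd02, h22]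
    have := mul_pos hθpos hr_pos
    linarith
  -- H1, H3 fills
  obtain ⟨La1, hLa11, hLa1f⟩ := fill hconv hz hP1 hN1 hu1 (m1 - K) hm1K1lt
  obtain ⟨La2, hLa21, hLa2f⟩ := fill hconv hz hP1 hN1 hu1 (Pa - K) hPaK1lt
  obtain ⟨La3, hLa31, hLa3f⟩ := fill hconv hz hP1 hN1 hu1 (F - K) hFK1lt
  obtain ⟨L1, hL1def⟩ : ∃ L : ℝ, L = max (max La1 La2) La3 := ⟨_, rfl⟩
  have hL11 : 1 ≤ L1 := by
    rw [hL1def]; exact hLa11.trans ((le_max_left _ _).trans (le_max_left _ _))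
  have hL1a : La1 ≤ L1 := by rw [hL1def]; exact (le_max_left _ _).trans (le_max_left _ _)
  have hL1b : La2 ≤ L1 := by rw [hL1def]; exact (le_max_right _ _).trans (le_max_left _ _)
  have hL1c : La3 ≤ L1 := by rw [hL1def]; exact le_max_right _ _
  obtain ⟨Lb1, hLb11, hLb1f⟩ := fill hconv hz hP3 hN3 hu3 (m3 - K) hm3K3lt
  obtain ⟨Lb2, hLb21, hLb2f⟩ := fill hconv hz hP3 hN3 hu3 (Pb - K) hPbK3lt
  obtain ⟨Lb3, hLb31, hLb3f⟩ := fill hconv hz hP3 hN3 hu3 (F - K) hFK3lt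
  obtain ⟨L3, hL3def⟩ : ∃ L : ℝ, L = max (max Lb1 Lb2) Lb3 := ⟨_, rfl⟩
  have hL31 : 1 ≤ L3 := by
    rw [hL3def]; exact hLb11.trans ((le_max_left _ _).trans (le_max_left _ _))
  have hL3a : Lb1 ≤ L3 := by rw [hL3def]; exact (le_max_left _ _).trans (le_max_left _ _)
  have hL3b : Lb2 ≤ L3 := by rw [hL3def]; exact (le_max_right _ _).trans (le_max_left _ _)
  have hL3c : Lb3 ≤ L3 := by rw [hL3def]; exact le_max_right _ _

  -- membership facts: cluster H1
  have hin1_m1 : ∀ j : ℕ, m1 ∈ Hset Q (L1 + (j:ℝ)) P1 K := fun j =>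
    mem_Hset' (by linarith [hjc j]) (hLa1f _ (by linarith [hjc j]))
  have hin1_Pa : ∀ j : ℕ, Pa ∈ Hset Q (L1 + (j:ℝ)) P1 K := fun j =>
    mem_Hset' (by linarith [hjc j]) (hLa2f _ (by linarith [hjc j]))
  have hin1_F : ∀ j : ℕ, F ∈ Hset Q (L1 + (j:ℝ)) P1 K := fun j =>
    mem_Hset' (by linarith [hjc j]) (hLa3f _ (by linarith [hjc j]))
  have hout1_m3 : ∀ j : ℕ, m3 ∉ Hset Q (L1 + (j:ℝ)) P1 K := fun j =>
    Hset_out_normal (by linarith [hjc j]) hN1 hm3K1gt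
  have hout1_Pb : ∀ j : ℕ, Pb ∉ Hset Q (L1 + (j:ℝ)) P1 K := fun j =>
    Hset_out_normal (by linarith [hjc j]) hN1 hPbK1gt
  have hout1_Pc : ∀ j : ℕ, Pc ∉ Hset Q (L1 + (j:ℝ)) P1 K := fun j =>
    Hset_out_normal (by linarith [hjc j]) hN1 hPcK1gt
  -- cluster H3
  have hin3_m3 : ∀ j : ℕ, m3 ∈ Hset Q (L3 + (j:ℝ)) P3 K := fun j =>
    mem_Hset' (by linarith [hjc j]) (hLb1f _ (by linarith [hjc j]))
  have hin3_Pb : ∀ j : ℕ, Pb ∈ Hset Q (L3 + (j:ℝ)) P3 K := fun j =>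
    mem_Hset' (by linarith [hjc j]) (hLb2f _ (by linarith [hjc j]))
  have hin3_F : ∀ j : ℕ, F ∈ Hset Q (L3 + (j:ℝ)) P3 K := fun j =>
    mem_Hset' (by linarith [hjc j]) (hLb3f _ (by linarith [hjc j]))
  have hout3_m1 : ∀ j : ℕ, m1 ∉ Hset Q (L3 + (j:ℝ)) P3 K := fun j =>
    Hset_out_normal (by linarith [hjc j]) hN3 hm1K3gt
  have hout3_Pa : ∀ j : ℕ, Pa ∉ Hset Q (L3 + (j:ℝ)) P3 K := fun j =>
    Hset_out_normal (by linarith [hjc j]) hN3 hPaK3gt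
  have hout3_Pc : ∀ j : ℕ, Pc ∉ Hset Q (L3 + (j:ℝ)) P3 K := fun j =>
    Hset_out_normal (by linarith [hjc j]) hN3 hPcK3gt
  -- cluster beta
  have hinB_m1 : ∀ j : ℕ, m1 ∈ Hset Q (LB + (j:ℝ)) P2 0 := by
    intro j
    apply mem_Hset' (by linarith [hjc j])
    rw [sub_zero]
    exact hLq1 _ (by linarith [hjc j])
  have hinB_m3 : ∀ j : ℕ, m3 ∈ Hset Q (LB + (j:ℝ)) P2 0 := by
    intro j
    apply mem_Hset' (by linarith [hjc j])
    rw [sub_zero]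
    exact hLq3 _ (by linarith [hjc j])
  have hinB_Pc : ∀ j : ℕ, Pc ∈ Hset Q (LB + (j:ℝ)) P2 0 := by
    intro j
    apply mem_Hset' (by linarith [hjc j])
    rw [sub_zero]
    exact hLqc _ (by linarith [hjc j])
  have houtB_Pa : ∀ j : ℕ, Pa ∉ Hset Q (LB + (j:ℝ)) P2 0 := fun j =>
    Hset_out_normal (by linarith [hjc j]) hN2 hPaW2gt
  have houtB_Pb : ∀ j : ℕ, Pb ∉ Hset Q (LB + (j:ℝ)) P2 0 := fun j =>
    Hset_out_normal (by linarith [hjc j]) hN2 hPbW2gt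
  have hFnorm : T * (1 + dot W3 W1) ≤ 2 * ‖F - 0‖ := by
    have habs := abs_dot_le_two_norm hW1u (F - 0)
    have e : dot (F - 0) W1 = -(T * (1 + dot W3 W1)) := by
      rw [sub_zero, hF, dot_smul_left, hdsW1]; ring
    rw [e, abs_neg] at habs
    calc T * (1 + dot W3 W1) ≤ |T * (1 + dot W3 W1)| := le_abs_self _
      _ ≤ 2 * ‖F - 0‖ := habs
  have houtB_F : ∀ j : ℕ, j < k' → F ∉ Hset Q (LB + (j:ℝ)) P2 0 := by
    intro j hj
    apply Hset_out_far (by linarith [hjc j]) hC0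
    have hj' : (j:ℝ) ≤ (k' : ℝ) := by exact_mod_cast hj.le
    have h1 : (LB + (j:ℝ)) * (C0 + ‖P2‖) ≤ (LB + (k':ℝ)) * (C0 + ‖P2‖ + 1) :=
      mul_le_mul (by linarith) (by linarith) (by positivity) (by linarith [hjc k'])
    linarith [hFnorm, hTs]
  -- cluster gamma
  have hθne : θ ≠ 0 := ne_of_gt hθpos
  have hinG : ∀ (D : ℝ × ℝ) (L : ℝ), (∀ μ : ℝ, L ≤ μ → P2 + μ⁻¹ • D ∈ Q) → L ≤ Lg →
      ∀ j : ℕ, g + θ • D ∈ Hset Q (θ * (Lg + (j:ℝ))) P2 g := by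
    intro D L hLf hLle j
    have hY : 0 < Lg + (j:ℝ) := by linarith [hjc j]
    have hμ : 0 < θ * (Lg + (j:ℝ)) := mul_pos hθpos hY
    apply mem_Hset' hμ
    have e : g + θ • D - g = θ • D := by abel
    rw [e, smul_smul]
    have hee : (θ * (Lg + (j:ℝ)))⁻¹ * θ = (Lg + (j:ℝ))⁻¹ := by
      rw [mul_inv, mul_comm, ← mul_assoc, mul_inv_cancel₀ hθne, one_mul]
    rw [hee]
    exact hLf _ (by linarith [hjc j])
  have hinG_Pa : ∀ j : ℕ, Pa ∈ Hset Q (θ * (Lg + (j:ℝ))) P2 g := by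
    intro j; rw [hPa]; exact hinG Da0 La hLa hLgA j
  have hinG_Pb : ∀ j : ℕ, Pb ∈ Hset Q (θ * (Lg + (j:ℝ))) P2 g := by
    intro j; rw [hPb]; exact hinG Db0 Lb hLb hLgB j
  have hinG_Pc : ∀ j : ℕ, Pc ∈ Hset Q (θ * (Lg + (j:ℝ))) P2 g := by
    intro j; rw [hPc]; exact hinG Dc0 Lc hLc hLgC j
  have hγrad : ∀ j : ℕ, j < k' → (θ * (Lg + (j:ℝ))) * (C0 + ‖P2‖) ≤ 1/8 := by
    intro j hj
    have hj' : (j:ℝ) ≤ (k' : ℝ) := by exact_mod_cast hj.le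
    have f1 : (Lg + (j:ℝ)) * (C0 + ‖P2‖) ≤ (Lg + (k':ℝ)) * (C0 + ‖P2‖ + 1) :=
      mul_le_mul (by linarith) (by linarith) (by positivity) (by linarith [hjc k'])
    have f2 : (θ * (Lg + (j:ℝ))) * (C0 + ‖P2‖) ≤ θ * X := by
      rw [hXdef, mul_assoc]
      exact mul_le_mul_of_nonneg_left f1 hθpos.le
    linarith [hθX]
  have hdist_m1g : 1 ≤ 2 * ‖m1 - g‖ := by
    have habs := abs_dot_le_two_norm hd0u (m1 - g)
    have e : dot (m1 - g) d0 = 1 := by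
      have hv : m1 - g = (1:ℝ) • d0 + (-(r/8) - θ*(r/4)) • W2 := by rw [hm1, hg]; module
      rw [hv, dot_comb, hdd, dot_comm W2 d0, hd02]; ring
    rw [e] at habs
    simpa using habs
  have hdist_m3g : 1 ≤ 2 * ‖m3 - g‖ := by
    have habs := abs_dot_le_two_norm hd0u (m3 - g)
    have e : dot (m3 - g) d0 = -1 := by
      have hv : m3 - g = ((-1:ℝ)) • d0 + (-(r/8) - θ*(r/4)) • W2 := by rw [hm3, hg]; module
      rw [hv, dot_comb, hdd, dot_comm W2 d0, hd02]; ring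
    rw [e] at habs
    simp only [abs_neg, abs_one] at habs
    linarith
  have hdist_Fg : (7:ℝ)/4 ≤ 2 * ‖F - g‖ := by
    have habs := abs_dot_le_two_norm hW1u (F - g)
    have e : dot (F - g) W1 = -(T * (1 + dot W3 W1)) - (θ*(r/4)) * dot W2 W1 := by
      have hv : F - g = (-T) • ds + (-(θ*(r/4))) • W2 := by rw [hF, hg]; module
      rw [hv, dot_comb, hdsW1]; ring
    have hb4a : 0 ≤ θ*(r/4) := mul_nonneg hθpos.le (by linarith)
    have hb4b : θ*(r/4) ≤ 1*(r/4) := mul_le_mul_of_nonneg_right hθ1 (by linarith)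
    have hsm := prod_le (by linarith : -(r/4) ≤ θ*(r/4)) (by linarith : θ*(r/4) ≤ r/4)
      hq1a hq1b
    have hsm2 := neg_prod_le (by linarith : -(r/4) ≤ θ*(r/4)) (by linarith : θ*(r/4) ≤ r/4)
      hq1a hq1b
    have h74 : (7:ℝ)/4 ≤ |dot (F - g) W1| := by
      rw [e]
      apply le_abs.mpr
      right
      linarith
    linarith
  have houtG_m1 : ∀ j : ℕ, j < k' → m1 ∉ Hset Q (θ * (Lg + (j:ℝ))) P2 g := by
    intro j hj
    apply Hset_out_far (hGpos j) hC0
    linarith [hγrad j hj, hdist_m1g]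
  have houtG_m3 : ∀ j : ℕ, j < k' → m3 ∉ Hset Q (θ * (Lg + (j:ℝ))) P2 g := by
    intro j hj
    apply Hset_out_far (hGpos j) hC0
    linarith [hγrad j hj, hdist_m3g]
  have houtG_F : ∀ j : ℕ, j < k' → F ∉ Hset Q (θ * (Lg + (j:ℝ))) P2 g := by
    intro j hj
    apply Hset_out_far (hGpos j) hC0
    linarith [hγrad j hj, hdist_Fg]

  -- the four clusters as finsets
  obtain ⟨c1, hc1⟩ : ∃ c : ℕ → Set (ℝ × ℝ), c = fun (j : ℕ) => Hset Q (L1 + (j:ℝ)) P1 K := ⟨_, rfl⟩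
  obtain ⟨c3, hc3⟩ : ∃ c : ℕ → Set (ℝ × ℝ), c = fun (j : ℕ) => Hset Q (L3 + (j:ℝ)) P3 K := ⟨_, rfl⟩
  obtain ⟨cB, hcB⟩ : ∃ c : ℕ → Set (ℝ × ℝ), c = fun (j : ℕ) => Hset Q (LB + (j:ℝ)) P2 0 := ⟨_, rfl⟩
  obtain ⟨cG, hcG⟩ : ∃ c : ℕ → Set (ℝ × ℝ), c = fun (j : ℕ) => Hset Q (θ * (Lg + (j:ℝ))) P2 g := ⟨_, rfl⟩
  obtain ⟨I1, hI1⟩ : ∃ I : Finset (Set (ℝ × ℝ)), I = (Finset.range k').image c1 := ⟨_, rfl⟩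
  obtain ⟨I3, hI3⟩ : ∃ I : Finset (Set (ℝ × ℝ)), I = (Finset.range k').image c3 := ⟨_, rfl⟩
  obtain ⟨IB, hIB⟩ : ∃ I : Finset (Set (ℝ × ℝ)), I = (Finset.range k').image cB := ⟨_, rfl⟩
  obtain ⟨IG, hIG⟩ : ∃ I : Finset (Set (ℝ × ℝ)), I = (Finset.range k').image cG := ⟨_, rfl⟩
  obtain ⟨S, hSdef⟩ : ∃ S : Finset (Set (ℝ × ℝ)), S = ((I1 ∪ I3) ∪ IB) ∪ IG := ⟨_, rfl⟩
  -- injectivity of cluster maps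
  have hmono : ∀ (σ : ℕ → ℝ), (∀ n, 0 < σ n) → (∀ a b : ℕ, a < b → σ a < σ b) →
      ∀ (P A : ℝ × ℝ) (a b : ℕ), Hset Q (σ a) P A = Hset Q (σ b) P A → a = b := by
    intro σ hpos hmo P A a b hab
    rcases lt_trichotomy a b with h | h | h
    · exact absurd hab (Hset_inj hQc hz (hpos a) (hmo _ _ h))
    · exact h
    · exact absurd hab.symm (Hset_inj hQc hz (hpos b) (hmo _ _ h))
  have hposL : ∀ L : ℝ, 1 ≤ L → ∀ n : ℕ, (0:ℝ) < L + (n:ℝ) := fun L hL n => by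
    have := hjc n; linarith
  have hmoL : ∀ (L : ℝ) (a b : ℕ), a < b → L + (a:ℝ) < L + (b:ℝ) := fun L a b hab => by
    have h2 : (a:ℝ) < (b:ℝ) := by exact_mod_cast hab
    linarith
  have hmono1 : ∀ a b : ℕ, c1 a = c1 b → a = b := by
    intro a b h
    rw [hc1] at h
    exact hmono (fun j => L1 + (j:ℝ)) (hposL L1 hL11) (hmoL L1) P1 K a b h
  have hmono3 : ∀ a b : ℕ, c3 a = c3 b → a = b := by
    intro a b h
    rw [hc3] at h
    exact hmono (fun j => L3 + (j:ℝ)) (hposL L3 hL31) (hmoL L3) P3 K a b h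
  have hmonoB : ∀ a b : ℕ, cB a = cB b → a = b := by
    intro a b h
    rw [hcB] at h
    exact hmono (fun j => LB + (j:ℝ)) (hposL LB hLB1) (hmoL LB) P2 0 a b h
  have hmonoG : ∀ a b : ℕ, cG a = cG b → a = b := by
    intro a b h
    rw [hcG] at h
    exact hmono (fun j => θ * (Lg + (j:ℝ))) (fun n => hGpos n)
      (fun a b hab => mul_lt_mul_of_pos_left (hmoL Lg a b hab) hθpos) P2 g a b h
  have hcard1 : I1.card = k' := by
    rw [hI1, Finset.card_image_of_injOn (fun a _ b _ h => hmono1 a b h), Finset.card_range]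
  have hcard3 : I3.card = k' := by
    rw [hI3, Finset.card_image_of_injOn (fun a _ b _ h => hmono3 a b h), Finset.card_range]
  have hcardB : IB.card = k' := by
    rw [hIB, Finset.card_image_of_injOn (fun a _ b _ h => hmonoB a b h), Finset.card_range]
  have hcardG : IG.card = k' := by
    rw [hIG, Finset.card_image_of_injOn (fun a _ b _ h => hmonoG a b h), Finset.card_range]
  -- disjointness of clusters (via separating points)
  have hdisjgen : ∀ (c c' : ℕ → Set (ℝ × ℝ)) (x : ℝ × ℝ),
      (∀ j : ℕ, j < k' → x ∈ c j) → (∀ j : ℕ, j < k' → x ∉ c' j) →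
      Disjoint ((Finset.range k').image c) ((Finset.range k').image c') := by
    intro c c' x hin hout
    rw [Finset.disjoint_left]
    rintro R hR hR'
    obtain ⟨j, hj, rfl⟩ := Finset.mem_image.mp hR
    obtain ⟨j', hj', he⟩ := Finset.mem_image.mp hR'
    exact hout j' (Finset.mem_range.mp hj') (by rw [he]; exact hin j (Finset.mem_range.mp hj))
  have D13 : Disjoint I1 I3 := by
    rw [hI1, hI3]
    exact hdisjgen c1 c3 m1 (fun j _ => by rw [hc1]; exact hin1_m1 j)
      (fun j _ => by rw [hc3]; exact hout3_m1 j)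
  have D1B : Disjoint I1 IB := by
    rw [hI1, hIB]
    exact hdisjgen c1 cB Pa (fun j _ => by rw [hc1]; exact hin1_Pa j)
      (fun j _ => by rw [hcB]; exact houtB_Pa j)
  have D1G : Disjoint I1 IG := by
    rw [hI1, hIG]
    exact hdisjgen c1 cG m1 (fun j _ => by rw [hc1]; exact hin1_m1 j)
      (fun j hj => by rw [hcG]; exact houtG_m1 j hj)
  have D3B : Disjoint I3 IB := by
    rw [hI3, hIB]
    exact hdisjgen c3 cB Pb (fun j _ => by rw [hc3]; exact hin3_Pb j)
      (fun j _ => by rw [hcB]; exact houtB_Pb j)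
  have D3G : Disjoint I3 IG := by
    rw [hI3, hIG]
    exact hdisjgen c3 cG m3 (fun j _ => by rw [hc3]; exact hin3_m3 j)
      (fun j hj => by rw [hcG]; exact houtG_m3 j hj)
  have DBG : Disjoint IB IG := by
    rw [hIB, hIG]
    exact hdisjgen cB cG m1 (fun j _ => by rw [hcB]; exact hinB_m1 j)
      (fun j hj => by rw [hcG]; exact houtG_m1 j hj)
  have hD13B : Disjoint (I1 ∪ I3) IB := Finset.disjoint_union_left.mpr ⟨D1B, D3B⟩
  have hD13BG : Disjoint ((I1 ∪ I3) ∪ IB) IG :=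
    Finset.disjoint_union_left.mpr ⟨Finset.disjoint_union_left.mpr ⟨D1G, D3G⟩, DBG⟩
  have hScard : S.card = 4 * k' := by
    rw [hSdef, Finset.card_union_of_disjoint hD13BG,
      Finset.card_union_of_disjoint hD13B, Finset.card_union_of_disjoint D13,
      hcard1, hcard3, hcardB, hcardG]
    ring
  -- the six filter identities
  have hfPa : S.filter (fun R => Pa ∈ R) = I1 ∪ IG := by
    apply Finset.ext
    intro R
    simp only [Finset.mem_filter, hSdef, Finset.mem_union, hI1, hI3, hIB, hIG,
      Finset.mem_image, Finset.mem_range]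
    constructor
    · rintro ⟨(((⟨j, hj, rfl⟩ | ⟨j, hj, rfl⟩) | ⟨j, hj, rfl⟩) | ⟨j, hj, rfl⟩), hmem⟩
      · exact Or.inl ⟨j, hj, rfl⟩
      · simp only [hc3] at hmem; exact absurd hmem (hout3_Pa j)
      · simp only [hcB] at hmem; exact absurd hmem (houtB_Pa j)
      · exact Or.inr ⟨j, hj, rfl⟩
    · rintro (⟨j, hj, rfl⟩ | ⟨j, hj, rfl⟩)
      · exact ⟨Or.inl (Or.inl (Or.inl ⟨j, hj, rfl⟩)), by simp only [hc1]; exact hin1_Pa j⟩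
      · exact ⟨Or.inr ⟨j, hj, rfl⟩, by simp only [hcG]; exact hinG_Pa j⟩
  have hfPb : S.filter (fun R => Pb ∈ R) = I3 ∪ IG := by
    apply Finset.ext
    intro R
    simp only [Finset.mem_filter, hSdef, Finset.mem_union, hI1, hI3, hIB, hIG,
      Finset.mem_image, Finset.mem_range]
    constructor
    · rintro ⟨(((⟨j, hj, rfl⟩ | ⟨j, hj, rfl⟩) | ⟨j, hj, rfl⟩) | ⟨j, hj, rfl⟩), hmem⟩
      · simp only [hc1] at hmem; exact absurd hmem (hout1_Pb j)
      · exact Or.inl ⟨j, hj, rfl⟩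
      · simp only [hcB] at hmem; exact absurd hmem (houtB_Pb j)
      · exact Or.inr ⟨j, hj, rfl⟩
    · rintro (⟨j, hj, rfl⟩ | ⟨j, hj, rfl⟩)
      · exact ⟨Or.inl (Or.inl (Or.inr ⟨j, hj, rfl⟩)), by simp only [hc3]; exact hin3_Pb j⟩
      · exact ⟨Or.inr ⟨j, hj, rfl⟩, by simp only [hcG]; exact hinG_Pb j⟩
  have hfPc : S.filter (fun R => Pc ∈ R) = IB ∪ IG := by
    apply Finset.ext
    intro R
    simp only [Finset.mem_filter, hSdef, Finset.mem_union, hI1, hI3, hIB, hIG,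
      Finset.mem_image, Finset.mem_range]
    constructor
    · rintro ⟨(((⟨j, hj, rfl⟩ | ⟨j, hj, rfl⟩) | ⟨j, hj, rfl⟩) | ⟨j, hj, rfl⟩), hmem⟩
      · simp only [hc1] at hmem; exact absurd hmem (hout1_Pc j)
      · simp only [hc3] at hmem; exact absurd hmem (hout3_Pc j)
      · exact Or.inl ⟨j, hj, rfl⟩
      · exact Or.inr ⟨j, hj, rfl⟩
    · rintro (⟨j, hj, rfl⟩ | ⟨j, hj, rfl⟩)
      · exact ⟨Or.inl (Or.inr ⟨j, hj, rfl⟩), by simp only [hcB]; exact hinB_Pc j⟩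
      · exact ⟨Or.inr ⟨j, hj, rfl⟩, by simp only [hcG]; exact hinG_Pc j⟩
  have hfm1 : S.filter (fun R => m1 ∈ R) = I1 ∪ IB := by
    apply Finset.ext
    intro R
    simp only [Finset.mem_filter, hSdef, Finset.mem_union, hI1, hI3, hIB, hIG,
      Finset.mem_image, Finset.mem_range]
    constructor
    · rintro ⟨(((⟨j, hj, rfl⟩ | ⟨j, hj, rfl⟩) | ⟨j, hj, rfl⟩) | ⟨j, hj, rfl⟩), hmem⟩
      · exact Or.inl ⟨j, hj, rfl⟩
      · simp only [hc3] at hmem; exact absurd hmem (hout3_m1 j)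
      · exact Or.inr ⟨j, hj, rfl⟩
      · simp only [hcG] at hmem; exact absurd hmem (houtG_m1 j hj)
    · rintro (⟨j, hj, rfl⟩ | ⟨j, hj, rfl⟩)
      · exact ⟨Or.inl (Or.inl (Or.inl ⟨j, hj, rfl⟩)), by simp only [hc1]; exact hin1_m1 j⟩
      · exact ⟨Or.inl (Or.inr ⟨j, hj, rfl⟩), by simp only [hcB]; exact hinB_m1 j⟩
  have hfm3 : S.filter (fun R => m3 ∈ R) = I3 ∪ IB := by
    apply Finset.ext
    intro R
    simp only [Finset.mem_filter, hSdef, Finset.mem_union, hI1, hI3, hIB, hIG,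
      Finset.mem_image, Finset.mem_range]
    constructor
    · rintro ⟨(((⟨j, hj, rfl⟩ | ⟨j, hj, rfl⟩) | ⟨j, hj, rfl⟩) | ⟨j, hj, rfl⟩), hmem⟩
      · simp only [hc1] at hmem; exact absurd hmem (hout1_m3 j)
      · exact Or.inl ⟨j, hj, rfl⟩
      · exact Or.inr ⟨j, hj, rfl⟩
      · simp only [hcG] at hmem; exact absurd hmem (houtG_m3 j hj)
    · rintro (⟨j, hj, rfl⟩ | ⟨j, hj, rfl⟩)
      · exact ⟨Or.inl (Or.inl (Or.inr ⟨j, hj, rfl⟩)), by simp only [hc3]; exact hin3_m3 j⟩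
      · exact ⟨Or.inl (Or.inr ⟨j, hj, rfl⟩), by simp only [hcB]; exact hinB_m3 j⟩
  have hfF : S.filter (fun R => F ∈ R) = I1 ∪ I3 := by
    apply Finset.ext
    intro R
    simp only [Finset.mem_filter, hSdef, Finset.mem_union, hI1, hI3, hIB, hIG,
      Finset.mem_image, Finset.mem_range]
    constructor
    · rintro ⟨(((⟨j, hj, rfl⟩ | ⟨j, hj, rfl⟩) | ⟨j, hj, rfl⟩) | ⟨j, hj, rfl⟩), hmem⟩
      · exact Or.inl ⟨j, hj, rfl⟩
      · exact Or.inr ⟨j, hj, rfl⟩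
      · simp only [hcB] at hmem; exact absurd hmem (houtB_F j hj)
      · simp only [hcG] at hmem; exact absurd hmem (houtG_F j hj)
    · rintro (⟨j, hj, rfl⟩ | ⟨j, hj, rfl⟩)
      · exact ⟨Or.inl (Or.inl (Or.inl ⟨j, hj, rfl⟩)), by simp only [hc1]; exact hin1_F j⟩
      · exact ⟨Or.inl (Or.inl (Or.inr ⟨j, hj, rfl⟩)), by simp only [hc3]; exact hin3_F j⟩
  -- conclusion
  refine ⟨S, ?_, ?_⟩
  · intro R hR
    rw [hSdef] at hR
    simp only [Finset.mem_union, hI1, hI3, hIB, hIG, Finset.mem_image,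
      Finset.mem_range] at hR
    rcases hR with ((⟨j, hj, rfl⟩ | ⟨j, hj, rfl⟩) | ⟨j, hj, rfl⟩) | ⟨j, hj, rfl⟩
    · simp only [hc1]; exact Hset_isHomothet (by linarith [hjc j]) _ _
    · simp only [hc3]; exact Hset_isHomothet (by linarith [hjc j]) _ _
    · simp only [hcB]; exact Hset_isHomothet (by linarith [hjc j]) _ _
    · simp only [hcG]; exact Hset_isHomothet (hGpos j) _ _
  · intro m hm f
    by_contra hcon
    push_neg at hcon
    have h2k'min : min (2 * k') k = 2 * k' := min_eq_left h2k'
    have key : ∀ (p : ℝ × ℝ) (IA IC : Finset (Set (ℝ × ℝ))), Disjoint IA IC →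
        IA.card = k' → IC.card = k' → S.filter (fun R => p ∈ R) = IA ∪ IC →
        Set.InjOn f ↑(IA ∪ IC) := by
      intro p IA IC hdisj hcA hcC hfilt
      have hcardU : (IA ∪ IC).card = 2 * k' := by
        rw [Finset.card_union_of_disjoint hdisj, hcA, hcC]; ring
      have h1 := hcon p
      rw [hfilt, hcardU, h2k'min] at h1
      have h3 : ((IA ∪ IC).image f).card = (IA ∪ IC).card :=
        le_antisymm Finset.card_image_le (by rw [hcardU]; exact h1)
      exact Finset.card_image_iff.mp h3
    have Inj13 := key F I1 I3 D13 hcard1 hcard3 hfF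
    have Inj1B := key m1 I1 IB D1B hcard1 hcardB hfm1
    have Inj1G := key Pa I1 IG D1G hcard1 hcardG hfPa
    have Inj3B := key m3 I3 IB D3B hcard3 hcardB hfm3
    have Inj3G := key Pb I3 IG D3G hcard3 hcardG hfPb
    have InjBG := key Pc IB IG DBG hcardB hcardG hfPc
    have mkL : ∀ {IA IC : Finset (Set (ℝ × ℝ))} {x : Set (ℝ × ℝ)},
        x ∈ IA → x ∈ (↑(IA ∪ IC) : Set (Set (ℝ × ℝ))) := by
      intro IA IC x h
      simp only [Finset.coe_union, Set.mem_union, Finset.mem_coe]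
      exact Or.inl h
    have mkR : ∀ {IA IC : Finset (Set (ℝ × ℝ))} {x : Set (ℝ × ℝ)},
        x ∈ IC → x ∈ (↑(IA ∪ IC) : Set (Set (ℝ × ℝ))) := by
      intro IA IC x h
      simp only [Finset.coe_union, Set.mem_union, Finset.mem_coe]
      exact Or.inr h
    have hglob : Set.InjOn f ↑S := by
      intro x hx y hy hxy
      have hx' : x ∈ I1 ∨ x ∈ I3 ∨ x ∈ IB ∨ x ∈ IG := by
        have hx2 : x ∈ S := hx
        rw [hSdef] at hx2
        simp only [Finset.mem_union] at hx2
        tauto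
      have hy' : y ∈ I1 ∨ y ∈ I3 ∨ y ∈ IB ∨ y ∈ IG := by
        have hy2 : y ∈ S := hy
        rw [hSdef] at hy2
        simp only [Finset.mem_union] at hy2
        tauto
      rcases hx' with h1 | h1 | h1 | h1 <;> rcases hy' with h2 | h2 | h2 | h2
      · exact Inj13 (mkL h1) (mkL h2) hxy
      · exact Inj13 (mkL h1) (mkR h2) hxy
      · exact Inj1B (mkL h1) (mkR h2) hxy
      · exact Inj1G (mkL h1) (mkR h2) hxy
      · exact Inj13 (mkR h1) (mkL h2) hxy
      · exact Inj13 (mkR h1) (mkR h2) hxy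
      · exact Inj3B (mkL h1) (mkR h2) hxy
      · exact Inj3G (mkL h1) (mkR h2) hxy
      · exact Inj1B (mkR h1) (mkL h2) hxy
      · exact Inj3B (mkR h1) (mkL h2) hxy
      · exact InjBG (mkL h1) (mkL h2) hxy
      · exact InjBG (mkL h1) (mkR h2) hxy
      · exact Inj1G (mkR h1) (mkL h2) hxy
      · exact Inj3G (mkR h1) (mkL h2) hxy
      · exact InjBG (mkR h1) (mkL h2) hxy
      · exact InjBG (mkR h1) (mkR h2) hxy
    have h5 : (S.image f).card = 4 * k' := by
      rw [Finset.card_image_of_injOn hglob, hScard]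
    have h6 : (S.image f).card ≤ m := by
      have := Finset.card_le_univ (S.image f)
      simpa using this
    rw [← hk'def] at hm
    omega




end

end DualLB

/-- `c̄_Q(k) ≥ 4⌊k/2⌋` for any range `Q` with three distinct directions: there is a
finite family `S` of homothets of `Q` such that no coloring with fewer than
`4⌊k/2⌋` colors makes every point polychromatically covered. -/
theorem dual_lower_bound (Q : Set (ℝ × ℝ)) (hQ : IsRange Q)
    (hdir : HasThreeDirections Q) (k : ℕ) (hk : 2 ≤ k) :
    ∃ S : Finset (Set (ℝ × ℝ)), (∀ R ∈ S, IsHomothet Q R) ∧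
      ∀ m : ℕ, m < 4 * (k / 2) → ∀ f : Set (ℝ × ℝ) → Fin m,
        ∃ p : ℝ × ℝ,
          ((S.filter (fun R => p ∈ R)).image f).card <
            min (S.filter (fun R => p ∈ R)).card k := by
  obtain ⟨hQc, hconv, ⟨z, hz⟩, h0Q⟩ := hQ
  obtain ⟨p1, p2, p3, v1, v2, v3, hf1, hf2, hf3, hn1, hu1, hn2, hu2, hn3, hu3,
    c12, c13, c23⟩ := hdir
  have hQclosed : IsClosed Q := hQc.isClosed
  have hp1 : p1 ∈ Q := by
    have := frontier_subset_closure (s := Q) hf1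
    rwa [hQclosed.closure_eq] at this
  have hp2 : p2 ∈ Q := by
    have := frontier_subset_closure (s := Q) hf2
    rwa [hQclosed.closure_eq] at this
  have hp3 : p3 ∈ Q := by
    have := frontier_subset_closure (s := Q) hf3
    rwa [hQclosed.closure_eq] at this
  obtain ⟨W1, W2, W3, d0, hperm, hd0u, hd02, hr1, hr3⟩ :=
    DualLB.pick_labels hn1.1 hn2.1 hn3.1 c12 c13 c23
  rcases hperm with ⟨rfl, rfl, rfl⟩ | ⟨rfl, rfl, rfl⟩ | ⟨rfl, rfl, rfl⟩ |
    ⟨rfl, rfl, rfl⟩ | ⟨rfl, rfl, rfl⟩ | ⟨rfl, rfl, rfl⟩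
  · exact DualLB.construction Q hQc hconv hz hp1 hn1 hu1 hp2 hn2 hu2 hp3 hn3 hu3
      hd0u hd02 hr1 hr3
      (DualLB.neg_one_lt_dot hn3.1 hn1.1 (fun h => c13 (by linarith))) k hk
  · exact DualLB.construction Q hQc hconv hz hp2 hn2 hu2 hp1 hn1 hu1 hp3 hn3 hu3
      hd0u hd02 hr1 hr3
      (DualLB.neg_one_lt_dot hn3.1 hn2.1 (fun h => c23 (by linarith))) k hk
  · exact DualLB.construction Q hQc hconv hz hp1 hn1 hu1 hp3 hn3 hu3 hp2 hn2 hu2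
      hd0u hd02 hr1 hr3
      (DualLB.neg_one_lt_dot hn2.1 hn1.1 (fun h => c12 (by linarith))) k hk
  · exact DualLB.construction Q hQc hconv hz hp3 hn3 hu3 hp1 hn1 hu1 hp2 hn2 hu2
      hd0u hd02 hr1 hr3
      (DualLB.neg_one_lt_dot hn2.1 hn3.1 (fun h => c23 (by linarith))) k hk
  · exact DualLB.construction Q hQc hconv hz hp2 hn2 hu2 hp3 hn3 hu3 hp1 hn1 hu1
      hd0u hd02 hr1 hr3
      (DualLB.neg_one_lt_dot hn1.1 hn2.1 (fun h => c12 (by linarith))) k hk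
  · exact DualLB.construction Q hQc hconv hz hp3 hn3 hu3 hp2 hn2 hu2 hp1 hn1 hu1
      hd0u hd02 hr1 hr3
      (DualLB.neg_one_lt_dot hn1.1 hn3.1 (fun h => c13 (by linarith))) k hk
end
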